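/- arXiv:1410.5000 — 2 statements merged into one kernel-verified Lean document; each statement's English description precedes it below -/
import Mathlib

section
/- Every trace of Lib with k = l + 2 threads that is not linearizable w.r.t. S_N contains, for each i ∈ {1, …, l}, exactly one call event to the method M_i, and this call is matched by a return event (i.e., for each i the trace has exactly one completed M_i method event and no open M_i calls). -/
namespace Paper

/-- The shared-variable domain `D = {Begin, Run, End}`. -/
inductive DVal where
  | Begin
  | Run
  | End
  deriving DecidableEq

/-- Method names of the library `Lib`: `Sum.inl (Sum.inl γ)` is `M_γ` (γ ∈ Γ),
`Sum.inl (Sum.inr i)` is `M_i` (1 ≤ i ≤ l), and `Sum.inr ()` is `M_Tick`. -/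
abbrev MName (Γ : Type) (l : ℕ) := (Γ ⊕ Fin l) ⊕ Unit

/-- The method `M_Tick`. -/
def tickName {Γ : Type} {l : ℕ} : MName Γ l := Sum.inr ()

/-- The method `M_γ`. -/
def gammaName {Γ : Type} {l : ℕ} (γ : Γ) : MName Γ l := Sum.inl (Sum.inl γ)

/-- The method `M_i`. -/
def insName {Γ : Type} {l : ℕ} (i : Fin l) : MName Γ l := Sum.inl (Sum.inr i)

/-- The final state (program counter) of each method. -/
def finalPC {Γ : Type} {l : ℕ} : MName Γ l → ℕ
  | Sum.inl (Sum.inl _) => 1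
  | Sum.inl (Sum.inr _) => 2
  | Sum.inr _ => 2

/-- Internal (read/write) transitions of the methods: `M_γ` reads `Run`;
`M_i` reads `Begin` then reads `End`; `M_Tick` writes `Run` then writes
`End`.  `mTrans m pc d d' pc'` means that method `m` can step from program
counter `pc` with shared value `d` to program counter `pc'` with shared value
`d'`. -/
def mTrans {Γ : Type} {l : ℕ} (m : MName Γ l) (pc : ℕ) (d d' : DVal)
    (pc' : ℕ) : Prop :=
  match m with
  | Sum.inl (Sum.inl _) =>
      pc = 0 ∧ pc' = 1 ∧ d = DVal.Run ∧ d' = d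
  | Sum.inl (Sum.inr _) =>
      (pc = 0 ∧ pc' = 1 ∧ d = DVal.Begin ∧ d' = d) ∨
      (pc = 1 ∧ pc' = 2 ∧ d = DVal.End ∧ d' = d)
  | Sum.inr _ =>
      (pc = 0 ∧ pc' = 1 ∧ d' = DVal.Run) ∨
      (pc = 1 ∧ pc' = 2 ∧ d' = DVal.End)

/-- Observable labels: calls (with thread and method) and returns (with
thread). -/
inductive Label (Γ : Type) (l k : ℕ) where
  | call (t : Fin k) (m : MName Γ l)
  | ret (t : Fin k)

/-- A configuration of `Lib^k`: the shared value together with, for each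
thread, `none` (idle) or the method it is running and its program counter. -/
abbrev LCfg (Γ : Type) (l k : ℕ) := DVal × (Fin k → Option (MName Γ l × ℕ))

/-- `Steps c tr c'` holds iff there is an execution from `c` to `c'` whose
trace (sequence of call/return labels) is `tr`; read/write steps are
unlabelled. -/
inductive Steps {Γ : Type} {l k : ℕ} :
    LCfg Γ l k → List (Label Γ l k) → LCfg Γ l k → Prop where
  | nil (c : LCfg Γ l k) : Steps c [] c
  | call {d : DVal} {μ : Fin k → Option (MName Γ l × ℕ)} (t : Fin k)
      (m : MName Γ l) {tr : List (Label Γ l k)} {c' : LCfg Γ l k}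
      (h : μ t = none)
      (hs : Steps (d, Function.update μ t (some (m, 0))) tr c') :
      Steps (d, μ) (Label.call t m :: tr) c'
  | ret {d : DVal} {μ : Fin k → Option (MName Γ l × ℕ)} (t : Fin k)
      (m : MName Γ l) {tr : List (Label Γ l k)} {c' : LCfg Γ l k}
      (h : μ t = some (m, finalPC m))
      (hs : Steps (d, Function.update μ t none) tr c') :
      Steps (d, μ) (Label.ret t :: tr) c'
  | internal {d : DVal} {μ : Fin k → Option (MName Γ l × ℕ)} (d' : DVal)
      (t : Fin k) (m : MName Γ l) (pc pc' : ℕ) {tr : List (Label Γ l k)}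
      {c' : LCfg Γ l k}
      (h : μ t = some (m, pc)) (ht : mTrans m pc d d' pc')
      (hs : Steps (d', Function.update μ t (some (m, pc'))) tr c') :
      Steps (d, μ) tr c'

/-- `tr` is a trace of `Lib` with `k` threads: the trace of some execution
from the initial configuration (shared value `Begin`, all threads idle). -/
def IsTrace {Γ : Type} {l k : ℕ} (tr : List (Label Γ l k)) : Prop :=
  ∃ c' : LCfg Γ l k, Steps (DVal.Begin, fun _ => none) tr c'

/-- The thread performing a label. -/
def threadOf {Γ : Type} {l k : ℕ} : Label Γ l k → Fin k
  | Label.call t _ => t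
  | Label.ret t => t

/-- Position `a` of `h` carries an open call: a call event with no matching
later return (no later event of the same thread). -/
def IsOpenCall {Γ : Type} {l k : ℕ} (h : List (Label Γ l k)) (a : ℕ) : Prop :=
  ∃ (t : Fin k) (m : MName Γ l), h[a]? = some (Label.call t m) ∧
    ∀ (b : ℕ) (lb : Label Γ l k), a < b → h[b]? = some lb → threadOf lb ≠ t

/-- A complete trace: no open calls. -/
def CompleteTrace {Γ : Type} {l k : ℕ} (h : List (Label Γ l k)) : Prop :=
  ∀ a : ℕ, ¬ IsOpenCall h a

/-- A method event: positions of a matching call/return pair, together with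
its thread and the name of the called method. -/
structure MEvent (Γ : Type) (l k : ℕ) where
  callPos : ℕ
  retPos : ℕ
  thread : Fin k
  name : MName Γ l

/-- `e` is a method event of the trace `h`: its call and return positions
match (same thread, no event of that thread in between). -/
def IsMEvent {Γ : Type} {l k : ℕ} (h : List (Label Γ l k))
    (e : MEvent Γ l k) : Prop :=
  e.callPos < e.retPos ∧
  h[e.callPos]? = some (Label.call e.thread e.name) ∧
  h[e.retPos]? = some (Label.ret e.thread) ∧
  ∀ (c : ℕ) (lb : Label Γ l k), e.callPos < c → c < e.retPos →
    h[c]? = some lb → threadOf lb ≠ e.thread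

/-- The happens-before relation: `e` returns before `e'` is called. -/
def HB {Γ : Type} {l k : ℕ} (e e' : MEvent Γ l k) : Prop :=
  e.retPos < e'.callPos

/-- A complete trace `h` is linearizable w.r.t. a specification `S`: there is
a total order (a list without repetition) of all its method events extending
happens-before whose label sequence is in `S`. -/
def LinearizableComplete {Γ : Type} {l k : ℕ} (h : List (Label Γ l k))
    (S : Set (List (MName Γ l))) : Prop :=
  ∃ es : List (MEvent Γ l k), es.Nodup ∧
    (∀ e : MEvent Γ l k, IsMEvent h e ↔ e ∈ es) ∧
    es.Pairwise (fun e e' => ¬ HB e' e) ∧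
    es.map MEvent.name ∈ S

/-- Remove from `h` the letters at the positions in `S`. -/
def deletePositions {α : Type} (h : List α) (S : Finset ℕ) : List α :=
  (List.range h.length).filterMap (fun a => if a ∈ S then none else h[a]?)

/-- `h'` is a completion of `h`: it is obtained by deleting some open calls of
`h` and appending return events at the end, and it is complete. -/
def CompletionOf {Γ : Type} {l k : ℕ} (h h' : List (Label Γ l k)) : Prop :=
  ∃ (S : Finset ℕ) (tail : List (Label Γ l k)),
    (∀ a ∈ S, IsOpenCall h a) ∧
    (∀ lb ∈ tail, ∃ t : Fin k, lb = Label.ret t) ∧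
    h' = deletePositions h S ++ tail ∧
    CompleteTrace h'

/-- A trace is linearizable w.r.t. `S` if some completion of it is. -/
def Linearizable {Γ : Type} {l k : ℕ} (h : List (Label Γ l k))
    (S : Set (List (MName Γ l))) : Prop :=
  ∃ h' : List (Label Γ l k), CompletionOf h h' ∧ LinearizableComplete h' S

/-- The specification `S_N`: words containing zero or at least two `M_Tick`,
or zero or at least two `M_i` for some `i`, or whose projection onto the
letters `M_i`, `M_γ` is (up to the renaming `γ ↦ M_γ`, `a_i ↦ M_i`) in the
language of the NFA `Nfa`. -/
def SpecN {Γ : Type} [DecidableEq Γ] {l : ℕ} {σ : Type}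
    (Nfa : NFA (Γ ⊕ Fin l) σ) : Set (List (MName Γ l)) :=
  {ws | ws.count tickName ≠ 1 ∨
        (∃ i : Fin l, ws.count (insName i) ≠ 1) ∨
        (∃ x ∈ Nfa.accepts, ws.filterMap Sum.getLeft? = x)}

/-- `u` (over `Γ ∪ A`) is an insertion of the letters `A = {a_1, …, a_l}`
(the elements of `Fin l`) into `w ∈ Γ*`: each letter of `A` is inserted
exactly once, in any order, anywhere in `w`. -/
def IsInsertion {Γ : Type} {l : ℕ} (w : List Γ) (u : List (Γ ⊕ Fin l)) : Prop :=
  ∃ (ws : Fin (l + 1) → List Γ) (p : Equiv.Perm (Fin l)),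
    w = (List.ofFn ws).flatten ∧
    u = (ws 0).map Sum.inl ++
        (List.ofFn fun i : Fin l => Sum.inr (p i) :: (ws i.succ).map Sum.inl).flatten


section Aux

variable {Γ : Type} {l k : ℕ}

/-- Position `b` holds an event of thread `t` and is after `a`. -/
def nextB (h : List (Label Γ l k)) (t : Fin k) (a b : ℕ) : Bool :=
  decide (a < b) && (match h[b]? with
    | some lb => decide (threadOf lb = t)
    | none => false)

lemma nextB_iff {h : List (Label Γ l k)} {t : Fin k} {a b : ℕ} :
    nextB h t a b = true ↔ a < b ∧ ∃ lb, h[b]? = some lb ∧ threadOf lb = t := by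
  unfold nextB
  cases hb : h[b]? with
  | none => simp [hb]
  | some lb => simp [hb]

/-- Alternation of a single thread's events. -/
inductive Alt (t : Fin k) : Bool → List (Label Γ l k) → Prop
  | nil (b : Bool) : Alt t b []
  | skip {b : Bool} {lb : Label Γ l k} {tr : List (Label Γ l k)}
      (h : threadOf lb ≠ t) (ht : Alt t b tr) : Alt t b (lb :: tr)
  | call {m : MName Γ l} {tr : List (Label Γ l k)}
      (ht : Alt t true tr) : Alt t false (Label.call t m :: tr)
  | ret {tr : List (Label Γ l k)}
      (ht : Alt t false tr) : Alt t true (Label.ret t :: tr)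

lemma steps_alt {c c' : LCfg Γ l k} {trc : List (Label Γ l k)}
    (h : Steps c trc c') (t : Fin k) : Alt t (c.2 t).isSome trc := by
  induction h with
  | nil => exact Alt.nil _
  | @call d μ t' m tr c' hμ hs ih =>
      by_cases ht : t' = t
      · subst ht
        simp only [hμ, Option.isSome_none]
        exact Alt.call (by simpa using ih)
      · refine Alt.skip (by simpa [threadOf] using ht) ?_
        simpa [Function.update_of_ne (Ne.symm ht)] using ih
  | @ret d μ t' m tr c' hμ hs ih =>
      by_cases ht : t' = t
      · subst ht
        simp only [hμ, Option.isSome_some]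
        exact Alt.ret (by simpa using ih)
      · refine Alt.skip (by simpa [threadOf] using ht) ?_
        simpa [Function.update_of_ne (Ne.symm ht)] using ih
  | @internal d μ d' t' m pc pc' tr c' hμ htrans hs ih =>
      by_cases ht : t' = t
      · subst ht
        simpa [hμ] using ih
      · simpa [Function.update_of_ne (Ne.symm ht)] using ih

lemma alt_first_ret {t : Fin k} {bb : Bool} {h : List (Label Γ l k)}
    (ha : Alt t bb h) (hb : bb = true) :
    ∀ (b : ℕ) (lb : Label Γ l k), h[b]? = some lb → threadOf lb = t →
      (∀ (c : ℕ) (lb' : Label Γ l k), c < b → h[c]? = some lb' → threadOf lb' ≠ t) →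
      lb = Label.ret t := by
  induction ha with
  | nil => intro b lb hb'; simp at hb'
  | @skip b0 lb0 tr hne hA ih =>
      intro b lb hget hth hbet
      cases b with
      | zero =>
          simp at hget; subst hget; exact absurd hth hne
      | succ b =>
          refine ih hb b lb (by simpa using hget) hth ?_
          intro c lb' hc hget'
          exact hbet (c + 1) lb' (by omega) (by simpa using hget')
  | @call m tr hA ih => simp at hb
  | @ret tr hA ih =>
      intro b lb hget hth hbet
      cases b with
      | zero => simp at hget; exact hget.symm
      | succ b =>
          exact absurd rfl (hbet 0 (Label.ret t) (by omega) (by simp))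

lemma alt_next_ret {t : Fin k} {bb : Bool} {h : List (Label Γ l k)}
    (ha : Alt t bb h) :
    ∀ (a b : ℕ) (m : MName Γ l) (lb : Label Γ l k),
      h[a]? = some (Label.call t m) → a < b → h[b]? = some lb → threadOf lb = t →
      (∀ (c : ℕ) (lb' : Label Γ l k), a < c → c < b → h[c]? = some lb' → threadOf lb' ≠ t) →
      lb = Label.ret t := by
  induction ha with
  | nil => intro a b m lb hget; simp at hget
  | @skip b0 lb0 tr hne hA ih =>
      intro a b m lb hcall hab hget hth hbet
      cases a with
      | zero =>
          simp at hcall; subst hcall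
          exact absurd rfl hne
      | succ a =>
          obtain ⟨b, rfl⟩ : ∃ b', b = b' + 1 := ⟨b - 1, by omega⟩
          refine ih a b m lb (by simpa using hcall) (by omega) (by simpa using hget) hth ?_
          intro c lb' hac hcb hget'
          exact hbet (c + 1) lb' (by omega) (by omega) (by simpa using hget')
  | @call m0 tr hA ih =>
      intro a b m lb hcall hab hget hth hbet
      cases a with
      | zero =>
          obtain ⟨b, rfl⟩ : ∃ b', b = b' + 1 := ⟨b - 1, by omega⟩
          refine alt_first_ret hA rfl b lb (by simpa using hget) hth ?_
          intro c lb' hc hget'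
          exact hbet (c + 1) lb' (by omega) (by omega) (by simpa using hget')
      | succ a =>
          obtain ⟨b, rfl⟩ : ∃ b', b = b' + 1 := ⟨b - 1, by omega⟩
          refine ih a b m lb (by simpa using hcall) (by omega) (by simpa using hget) hth ?_
          intro c lb' hac hcb hget'
          exact hbet (c + 1) lb' (by omega) (by omega) (by simpa using hget')
  | @ret tr hA ih =>
      intro a b m lb hcall hab hget hth hbet
      cases a with
      | zero => simp at hcall
      | succ a =>
          obtain ⟨b, rfl⟩ : ∃ b', b = b' + 1 := ⟨b - 1, by omega⟩
          refine ih a b m lb (by simpa using hcall) (by omega) (by simpa using hget) hth ?_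
          intro c lb' hac hcb hget'
          exact hbet (c + 1) lb' (by omega) (by omega) (by simpa using hget')

/-- The well-formedness property of traces that we need. -/
def WfP (tr : List (Label Γ l k)) : Prop :=
  ∀ (a : ℕ) (t : Fin k) (m : MName Γ l) (H : ∃ b, nextB tr t a b = true),
    tr[a]? = some (Label.call t m) → tr[Nat.find H]? = some (Label.ret t)

lemma trace_wf {tr : List (Label Γ l k)} (htr : IsTrace tr) : WfP tr := by
  obtain ⟨c', hs⟩ := htr
  intro a t m H hcall
  have halt : Alt t false tr := by simpa using steps_alt hs t
  have hfs := nextB_iff.mp (Nat.find_spec H)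
  obtain ⟨hab, lb, hget, hth⟩ := hfs
  have hlb : lb = Label.ret t := by
    refine alt_next_ret halt a (Nat.find H) m lb hcall hab hget hth ?_
    intro c lb' hac hcb hget' hth'
    exact absurd (nextB_iff.mpr ⟨hac, lb', hget', hth'⟩) (Nat.find_min H hcb)
  rw [hget, hlb]

end Aux

section Aux2

variable {α β : Type}

lemma filterMap_range_getElem? (h : List α) :
    (List.range h.length).filterMap (fun a => h[a]?) = h := by
  induction h with
  | nil => simp
  | cons x xs ih =>
      rw [List.length_cons, List.range_succ_eq_map, List.filterMap_cons]
      have h2 : (fun a => (x :: xs)[a]?) ∘ Nat.succ = fun a => xs[a]? := by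
        funext a; simp
      simp only [List.getElem?_cons_zero, List.filterMap_map, h2, ih]

lemma getElem?_filterMap_total {f : α → Option β} {L : List α}
    (hf : ∀ x ∈ L, (f x).isSome) (j : ℕ) :
    (L.filterMap f)[j]? = L[j]?.bind f := by
  induction L generalizing j with
  | nil => simp
  | cons x L ih =>
      obtain ⟨y, hy⟩ := Option.isSome_iff_exists.mp (hf x (by simp))
      cases j with
      | zero => simp [List.filterMap_cons, hy]
      | succ j =>
          simp only [List.filterMap_cons, hy, List.getElem?_cons_succ]
          exact ih (fun x hx => hf x (by simp [hx])) j

lemma length_filterMap_total {f : α → Option β} {L : List α}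
    (hf : ∀ x ∈ L, (f x).isSome) : (L.filterMap f).length = L.length := by
  induction L with
  | nil => simp
  | cons x L ih =>
      obtain ⟨y, hy⟩ := Option.isSome_iff_exists.mp (hf x (by simp))
      simp only [List.filterMap_cons, hy, List.length_cons]
      rw [ih (fun x hx => hf x (by simp [hx]))]

lemma countP_filterMap (f : α → Option β) (p : β → Bool) (L : List α) :
    (L.filterMap f).countP p = L.countP (fun a => ((f a).map p).getD false) := by
  induction L with
  | nil => simp
  | cons x L ih =>
      cases hx : f x with
      | none => simp [List.filterMap_cons, hx, List.countP_cons, ih]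
      | some y =>
          simp only [List.filterMap_cons, hx, List.countP_cons, ih, Option.map_some,
            Option.getD_some]

lemma countP_split (p r : α → Bool) (L : List α) :
    L.countP p = L.countP (fun a => p a && r a) + L.countP (fun a => p a && !r a) := by
  induction L with
  | nil => simp
  | cons x L ih =>
      simp only [List.countP_cons, ih]
      cases p x <;> cases r x <;> simp <;> omega

lemma countP_eq_one_nodup {L : List ℕ} (hnd : L.Nodup) {a0 : ℕ} (ha : a0 ∈ L) :
    L.countP (fun a => decide (a = a0)) = 1 := by
  induction L with
  | nil => cases ha
  | cons x L ih =>
      rw [List.nodup_cons] at hnd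
      rcases List.mem_cons.mp ha with rfl | hmem
      · have hz : L.countP (fun a => decide (a = a0)) = 0 :=
          List.countP_eq_zero.mpr (fun a hmem' h' => by
            have ha' : a = a0 := of_decide_eq_true h'
            exact hnd.1 (ha' ▸ hmem'))
        simp [List.countP_cons, hz]
      · have hx : x ≠ a0 := fun h => hnd.1 (h ▸ hmem)
        simp [List.countP_cons, hx, ih hnd.2 hmem]

lemma filterMap_ite {S : Finset ℕ} (f : ℕ → Option α) (L : List ℕ) :
    L.filterMap (fun a => if a ∈ S then none else f a) =
      (L.filter (fun a => !decide (a ∈ S))).filterMap f := by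
  induction L with
  | nil => rfl
  | cons x L ih =>
      by_cases hx : x ∈ S <;>
        simp [List.filter_cons, hx, List.filterMap_cons, ih]

lemma deletePositions_eq (h : List α) (S : Finset ℕ) :
    deletePositions h S =
      ((List.range h.length).filter (fun a => !decide (a ∈ S))).filterMap
        (fun a => h[a]?) :=
  filterMap_ite _ _

end Aux2

lemma mname_beq_iff {Γ : Type} [DecidableEq Γ] {l : ℕ} (m x : MName Γ l) :
    (m == x) = true ↔ m = x := by
  rcases m with (γ|i)|u <;> rcases x with (γ'|i')|u' <;>
    first
      | (show decide _ = true ↔ _ ; simp)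
      | (show false = true ↔ _ ; simp)
      | (show true = true ↔ _ ; simp)

section Aux3

variable {Γ : Type} {l k : ℕ}

/-- Every call has a matching next event which is its return. -/
def GoodH (h : List (Label Γ l k)) : Prop :=
  ∀ (a : ℕ) (t : Fin k) (m : MName Γ l), h[a]? = some (Label.call t m) →
    ∃ b, a < b ∧ h[b]? = some (Label.ret t) ∧
      ∀ (c : ℕ) (lb : Label Γ l k), a < c → c < b → h[c]? = some lb →
        threadOf lb ≠ t

open Classical in
/-- The method event generated at a call position. -/
noncomputable def mkEv (h : List (Label Γ l k)) (a : ℕ) : Option (MEvent Γ l k) :=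
  match h[a]? with
  | some (Label.call t m) =>
      if H : ∃ b, nextB h t a b = true then some ⟨a, Nat.find H, t, m⟩ else none
  | some (Label.ret _) => none
  | none => none

lemma mkEv_shape {h : List (Label Γ l k)} {a : ℕ} {e : MEvent Γ l k}
    (he : mkEv h a = some e) :
    e.callPos = a ∧ a < e.retPos ∧ h[a]? = some (Label.call e.thread e.name) := by
  unfold mkEv at he
  split at he
  case _ t m heq =>
      split at he
      case isTrue H =>
          cases he
          refine ⟨rfl, ?_, heq⟩
          exact (nextB_iff.mp (Nat.find_spec H)).1
      case isFalse => exact absurd he (by simp)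
  case _ => exact absurd he (by simp)
  case _ => exact absurd he (by simp)

lemma mkEv_none_of_none {h : List (Label Γ l k)} {a : ℕ} (hn : h[a]? = none) :
    mkEv h a = none := by
  unfold mkEv; rw [hn]

lemma mkEv_none_of_ret {h : List (Label Γ l k)} {a : ℕ} {t : Fin k}
    (hn : h[a]? = some (Label.ret t)) : mkEv h a = none := by
  unfold mkEv; rw [hn]

lemma mkEv_of_call {h : List (Label Γ l k)} (hG : GoodH h) {a : ℕ} {t : Fin k}
    {m : MName Γ l} (hcall : h[a]? = some (Label.call t m)) :
    ∃ b, mkEv h a = some ⟨a, b, t, m⟩ ∧ a < b ∧ h[b]? = some (Label.ret t) ∧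
      ∀ (c : ℕ) (lb : Label Γ l k), a < c → c < b → h[c]? = some lb →
        threadOf lb ≠ t := by
  obtain ⟨b0, hab0, hret0, hbet0⟩ := hG a t m hcall
  have hb0 : nextB h t a b0 = true := nextB_iff.mpr ⟨hab0, _, hret0, rfl⟩
  have H : ∃ b, nextB h t a b = true := ⟨b0, hb0⟩
  have hmk : mkEv h a = some ⟨a, Nat.find H, t, m⟩ := by
    unfold mkEv; rw [hcall]; exact dif_pos H
  obtain ⟨haf, lb, hgf, hthf⟩ := nextB_iff.mp (Nat.find_spec H)
  have hle : Nat.find H ≤ b0 := Nat.find_min' H hb0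
  have hfb : Nat.find H = b0 := by
    rcases lt_or_eq_of_le hle with hlt | heq
    · exact absurd hthf (hbet0 _ lb haf hlt hgf)
    · exact heq
  refine ⟨Nat.find H, hmk, haf, ?_, ?_⟩
  · rw [hfb]; exact hret0
  · intro c lb' hac hcf hgc hthc
    exact absurd (nextB_iff.mpr ⟨hac, lb', hgc, hthc⟩) (Nat.find_min H hcf)

/-- The list of all method events of `h`, in order of call positions. -/
noncomputable def evList (h : List (Label Γ l k)) : List (MEvent Γ l k) :=
  (List.range h.length).filterMap (mkEv h)

lemma evList_nodup (h : List (Label Γ l k)) : (evList h).Nodup := by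
  refine List.Nodup.filterMap ?_ (List.nodup_range)
  intro a a' e he he'
  rw [Option.mem_def] at he he'
  rw [← (mkEv_shape he).1, ← (mkEv_shape he').1]

lemma evList_mem_isMEvent {h : List (Label Γ l k)} (hG : GoodH h)
    {e : MEvent Γ l k} (he : e ∈ evList h) : IsMEvent h e := by
  obtain ⟨a, _, hmk⟩ := List.mem_filterMap.mp he
  obtain ⟨hcp, _, hcall⟩ := mkEv_shape hmk
  obtain ⟨b, hmk', hab, hret, hbet⟩ := mkEv_of_call hG hcall
  rw [hmk] at hmk'
  have he2 : e = ⟨a, b, e.thread, e.name⟩ := Option.some_inj.mp hmk'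
  rw [he2]
  exact ⟨hab, hcall, hret, hbet⟩

lemma isMEvent_mem_evList {h : List (Label Γ l k)} {e : MEvent Γ l k}
    (he : IsMEvent h e) : e ∈ evList h := by
  obtain ⟨hlt, hcall, hret, hbet⟩ := he
  have hnb : nextB h e.thread e.callPos e.retPos = true :=
    nextB_iff.mpr ⟨hlt, _, hret, rfl⟩
  have H : ∃ b, nextB h e.thread e.callPos b = true := ⟨e.retPos, hnb⟩
  have hle : Nat.find H ≤ e.retPos := Nat.find_min' H hnb
  obtain ⟨haf, lb, hgf, hthf⟩ := nextB_iff.mp (Nat.find_spec H)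
  have hfind : Nat.find H = e.retPos := by
    rcases lt_or_eq_of_le hle with hlt' | h' 
    · exact absurd hthf (hbet _ lb haf hlt' hgf)
    · exact h' 
  have hmk : mkEv h e.callPos = some e := by
    have h1 : mkEv h e.callPos
        = some ⟨e.callPos, Nat.find H, e.thread, e.name⟩ := by
      unfold mkEv; rw [hcall]; exact dif_pos H
    rw [h1, hfind]
  exact List.mem_filterMap.mpr
    ⟨e.callPos, List.mem_range.mpr (List.getElem?_eq_some_iff.mp hcall).1, hmk⟩

lemma evList_pairwise (h : List (Label Γ l k)) :
    (evList h).Pairwise (fun e e' => ¬ HB e' e) := by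
  refine List.pairwise_filterMap.mpr ?_
  refine (List.pairwise_lt_range).imp ?_
  intro a b hab e he e' he'
  obtain ⟨h1, h2, -⟩ := mkEv_shape he
  obtain ⟨h1', h2', -⟩ := mkEv_shape he'
  intro hHB
  unfold HB at hHB
  omega

lemma completeTrace_of_goodH {h : List (Label Γ l k)} (hG : GoodH h) :
    CompleteTrace h := by
  intro a ⟨t, m, hcall, hno⟩
  obtain ⟨b, hab, hret, -⟩ := hG a t m hcall
  exact hno b _ hab hret rfl

lemma evList_count {h : List (Label Γ l k)} (hG : GoodH h) (x : MName Γ l)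
    [DecidableEq Γ] (p : Label Γ l k → Bool)
    (hp_ret : ∀ t, p (Label.ret t) = false)
    (hp_call : ∀ t m, p (Label.call t m) = true ↔ m = x) :
    ((evList h).map MEvent.name).count x = h.countP p := by
  rw [List.count_eq_countP, List.countP_map]
  unfold evList
  rw [countP_filterMap]
  conv_rhs => rw [← filterMap_range_getElem? h]
  rw [countP_filterMap]
  refine List.countP_congr ?_
  intro a _
  cases hl : h[a]? with
  | none => simp [mkEv_none_of_none hl, hl]
  | some lb =>
      cases lb with
      | ret t => simp [mkEv_none_of_ret hl, hl, hp_ret t]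
      | call t m =>
          obtain ⟨b, hmk, -, -, -⟩ := mkEv_of_call hG hl
          simp only [hmk, hl, Option.map_some, Option.getD_some]
          rw [hp_call t m]
          exact mname_beq_iff m x

end Aux3

section Aux4

variable {Γ : Type} {l k : ℕ}

lemma goodH_completion {tr : List (Label Γ l k)} (hWF : WfP tr)
    (S : Finset ℕ) (hS : ∀ a ∈ S, IsOpenCall tr a)
    (tail : List (Label Γ l k))
    (hcase : (tail = [] ∧ ∀ a, IsOpenCall tr a → a ∈ S) ∨
      ∃ (a0 : ℕ) (t0 : Fin k) (m0 : MName Γ l), tail = [Label.ret t0] ∧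
        tr[a0]? = some (Label.call t0 m0) ∧ IsOpenCall tr a0 ∧ a0 ∉ S ∧
        (∀ a, IsOpenCall tr a → a ∈ S ∨ a = a0)) :
    GoodH (deletePositions tr S ++ tail) := by
  classical
  set n := tr.length with hn
  set K := (List.range n).filter (fun a => !decide (a ∈ S)) with hKdef
  have hKlt : ∀ a ∈ K, a < n := fun a ha => List.mem_range.mp (List.mem_filter.mp ha).1
  have hKS : ∀ a ∈ K, a ∉ S := by
    intro a ha
    have := (List.mem_filter.mp ha).2
    simpa using this
  have hKmem : ∀ a, a < n → a ∉ S → a ∈ K := by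
    intro a h1 h2
    exact List.mem_filter.mpr ⟨List.mem_range.mpr h1, by simpa using h2⟩
  have hKtot : ∀ a ∈ K, (tr[a]?).isSome := by
    intro a ha
    rw [List.getElem?_eq_getElem (hKlt a ha)]
    rfl
  have hdp : deletePositions tr S = K.filterMap (fun a => tr[a]?) :=
    deletePositions_eq tr S
  have hlen : (deletePositions tr S).length = K.length := by
    rw [hdp]; exact length_filterMap_total hKtot
  have hgetd : ∀ j : ℕ, (deletePositions tr S)[j]? = K[j]?.bind (fun a => tr[a]?) := by
    intro j; rw [hdp]; exact getElem?_filterMap_total hKtot j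
  have hmono : ∀ (j j' : ℕ) (hj : j < K.length) (hj' : j' < K.length),
      j < j' → K[j] < K[j'] := by
    intro j j' hj hj' hlt
    exact List.pairwise_iff_getElem.mp ((List.pairwise_lt_range (n := n)).filter _) j j' hj hj' hlt
  intro j t m hcall
  rcases Nat.lt_or_ge j (deletePositions tr S).length with hj | hj
  · -- call inside the deletePositions part
    have h1 : (deletePositions tr S)[j]? = some (Label.call t m) := by
      rw [List.getElem?_append, if_pos hj] at hcall
      exact hcall
    have hjK : j < K.length := hlen ▸ hj
    have hKj : K[j]? = some (K[j]'hjK) := List.getElem?_eq_getElem hjK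
    have hcallA : tr[(K[j]'hjK)]? = some (Label.call t m) := by
      rw [hgetd j, hKj] at h1
      simpa using h1
    have haK : (K[j]'hjK) ∈ K := List.getElem_mem hjK
    by_cases hopen : IsOpenCall tr (K[j]'hjK)
    · -- the kept open call: must be the special a0 of case B
      rcases hcase with ⟨htail, hall⟩ | ⟨a0, t0, m0, htail, hcall0, hopen0, ha0S, hall⟩
      · exact absurd (hall _ hopen) (hKS _ haK)
      · have ha0 : (K[j]'hjK) = a0 := (hall _ hopen).resolve_left (hKS _ haK)
        have ht0 : t0 = t ∧ m0 = m := by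
          rw [ha0, hcall0] at hcallA
          have := Option.some_inj.mp hcallA
          cases this
          exact ⟨rfl, rfl⟩
        obtain ⟨ht0, hm0⟩ := ht0
        refine ⟨(deletePositions tr S).length, hj, ?_, ?_⟩
        · rw [List.getElem?_append_right (le_refl _), Nat.sub_self, htail, ht0]
          rfl
        · intro c lb hjc hcb hgetc hth
          have hcl : c < (deletePositions tr S).length := hcb
          have hcK : c < K.length := hlen ▸ hcl
          have hKc : K[c]? = some (K[c]'hcK) := List.getElem?_eq_getElem hcK
          have hgc : tr[(K[c]'hcK)]? = some lb := by
            rw [List.getElem?_append, if_pos hcl, hgetd c, hKc] at hgetc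
            simpa using hgetc
          obtain ⟨t', m', hcall', hno⟩ := hopen
          have ht' : t' = t := by
            rw [hcallA] at hcall'
            have := Option.some_inj.mp hcall'
            cases this
            rfl
          have hlt2 : (K[j]'hjK) < (K[c]'hcK) := hmono j c hjK hcK hjc
          exact absurd hth (ht' ▸ hno _ lb hlt2 hgc)
    · -- matched call
      have H : ∃ b, nextB tr t (K[j]'hjK) b = true := by
        by_contra hH
        exact hopen ⟨t, m, hcallA, fun b lb hab hb hth =>
          hH ⟨b, nextB_iff.mpr ⟨hab, lb, hb, hth⟩⟩⟩
      have hret := hWF _ t m H hcallA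
      have hab0 : (K[j]'hjK) < Nat.find H := (nextB_iff.mp (Nat.find_spec H)).1
      have hb0n : Nat.find H < n := (List.getElem?_eq_some_iff.mp hret).1
      have hb0S : Nat.find H ∉ S := by
        intro hmem
        obtain ⟨t', m', hc', -⟩ := hS _ hmem
        rw [hret] at hc'
        simp at hc'
      have hb0K : Nat.find H ∈ K := hKmem _ hb0n hb0S
      obtain ⟨j', hj', hKj'⟩ := List.mem_iff_getElem.mp hb0K
      have hjj' : j < j' := by
        rcases lt_trichotomy j j' with h | h | h
        · exact h
        · exfalso
          subst h
          have heq : K[j]'hjK = Nat.find H := by rw [← hKj']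
          omega
        · exfalso
          have := hmono j' j hj' hjK h
          rw [hKj'] at this
          omega
      have hj'd : j' < (deletePositions tr S).length := hlen ▸ hj'
      refine ⟨j', hjj', ?_, ?_⟩
      · rw [List.getElem?_append, if_pos hj'd, hgetd j',
          List.getElem?_eq_getElem hj', hKj']
        simpa using hret
      · intro c lb hjc hcj' hgetc hth
        have hcl : c < (deletePositions tr S).length := lt_trans hcj' hj'd
        have hcK : c < K.length := hlen ▸ hcl
        have hKc : K[c]? = some (K[c]'hcK) := List.getElem?_eq_getElem hcK
        have hgc : tr[(K[c]'hcK)]? = some lb := by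
          rw [List.getElem?_append, if_pos hcl, hgetd c, hKc] at hgetc
          simpa using hgetc
        have hlt1 : (K[j]'hjK) < (K[c]'hcK) := hmono j c hjK hcK hjc
        have hlt2 : (K[c]'hcK) < Nat.find H := by
          have := hmono c j' hcK hj' hcj'
          rw [hKj'] at this
          exact this
        exact absurd (nextB_iff.mpr ⟨hlt1, lb, hgc, hth⟩) (Nat.find_min H hlt2)
  · -- call in the tail: impossible
    rw [List.getElem?_append_right hj] at hcall
    rcases hcase with ⟨htail, -⟩ | ⟨a0, t0, m0, htail, -, -, -, -⟩
    · rw [htail] at hcall; simp at hcall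
    · rw [htail] at hcall
      rcases hd : j - (deletePositions tr S).length with _ | d
      · rw [hd] at hcall; simp at hcall
      · rw [hd] at hcall; simp at hcall

end Aux4

/-- Every trace of `Lib` with `k = l + 2` threads that is
not linearizable w.r.t. `S_N` contains, for each `i ∈ {1, …, l}`, exactly one
call event to `M_i`, and this call is matched by a return event. -/
theorem unique_completed_insertion_methods
    (Γ : Type) (instF : Fintype Γ) (instD : DecidableEq Γ) (l : ℕ)
    (σ : Type) (instσ : Fintype σ) (Nfa : NFA (Γ ⊕ Fin l) σ)
    (tr : List (Label Γ l (l + 2)))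
    (htr : IsTrace tr) (hnl : ¬ Linearizable tr (SpecN Nfa)) :
    ∀ i : Fin l,
      tr.countP (fun lb => match lb with
        | Label.call _ m => decide (m = insName i)
        | Label.ret _ => false) = 1 ∧
      ∀ (a : ℕ) (t : Fin (l + 2)), tr[a]? = some (Label.call t (insName i)) →
        ∃ e : MEvent Γ l (l + 2), IsMEvent tr e ∧ e.callPos = a := by
  intro i
  classical
  set p0 : Label Γ l (l + 2) → Bool := fun lb => match lb with
    | Label.call _ m => decide (m = insName i)
    | Label.ret _ => false with hp0
  have hWF : WfP tr := trace_wf htr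
  set n := tr.length with hn
  have hOpLt : ∀ a, IsOpenCall tr a → a < n := by
    rintro a ⟨t, m, hc, -⟩
    exact (List.getElem?_eq_some_iff.mp hc).1
  set OpS : Finset ℕ := (Finset.range n).filter (fun a => IsOpenCall tr a) with hOpSdef
  have hOpS_mem : ∀ a, a ∈ OpS ↔ IsOpenCall tr a := by
    intro a
    constructor
    · intro h; exact (Finset.mem_filter.mp h).2
    · intro h; exact Finset.mem_filter.mpr ⟨Finset.mem_range.mpr (hOpLt a h), h⟩
  set q : ℕ → Bool := fun a => ((tr[a]?).map p0).getD false with hqdef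
  have hq : tr.countP p0 = (List.range n).countP q := by
    conv_lhs => rw [← filterMap_range_getElem? tr]
    rw [countP_filterMap]
  set Cm := (List.range n).countP (fun a => q a && !decide (a ∈ OpS)) with hCmdef
  set Cop := (List.range n).countP (fun a => q a && decide (a ∈ OpS)) with hCopdef
  have hsplit : (List.range n).countP q = Cop + Cm :=
    countP_split q (fun a => decide (a ∈ OpS)) _
  have hbuild : ∀ (S : Finset ℕ) (tail : List (Label Γ l (l + 2))),
      (∀ a ∈ S, IsOpenCall tr a) →
      (∀ lb ∈ tail, ∃ t, lb = Label.ret t) →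
      ((tail = [] ∧ ∀ a, IsOpenCall tr a → a ∈ S) ∨
        ∃ (a0 : ℕ) (t0 : Fin (l + 2)) (m0 : MName Γ l), tail = [Label.ret t0] ∧
          tr[a0]? = some (Label.call t0 m0) ∧ IsOpenCall tr a0 ∧ a0 ∉ S ∧
          (∀ a, IsOpenCall tr a → a ∈ S ∨ a = a0)) →
      (deletePositions tr S ++ tail).countP p0 ≠ 1 → False := by
    intro S tail hS htail hcase hcnt
    apply hnl
    have hG := goodH_completion hWF S hS tail hcase
    refine ⟨deletePositions tr S ++ tail,
      ⟨S, tail, hS, htail, rfl, completeTrace_of_goodH hG⟩, ?_⟩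
    refine ⟨evList (deletePositions tr S ++ tail),
      evList_nodup (deletePositions tr S ++ tail), ?_,
      evList_pairwise (deletePositions tr S ++ tail), ?_⟩
    · intro e
      exact ⟨isMEvent_mem_evList, evList_mem_isMEvent hG⟩
    · refine Or.inr (Or.inl ⟨i, ?_⟩)
      rw [evList_count hG (insName i) p0 (fun t => by simp [hp0])
        (fun t m => by simp [hp0])]
      exact hcnt
  have hcount : ∀ (S : Finset ℕ) (tail : List (Label Γ l (l + 2))),
      (deletePositions tr S ++ tail).countP p0
        = (List.range n).countP (fun a => q a && !decide (a ∈ S)) + tail.countP p0 := by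
    intro S tail
    rw [List.countP_append]
    congr 1
    rw [deletePositions_eq, countP_filterMap, List.countP_filter]
  have hCm : Cm = 1 := by
    by_contra hCm1
    refine hbuild OpS [] (fun a ha => (hOpS_mem a).mp ha) (by simp)
      (Or.inl ⟨rfl, fun a ha => (hOpS_mem a).mpr ha⟩) ?_
    rw [hcount OpS []]
    simpa using hCm1
  have hCop : Cop = 0 := by
    by_contra hCop1
    have hpos : 0 < Cop := Nat.pos_of_ne_zero hCop1
    obtain ⟨a0, ha0r, ha0p⟩ := List.countP_pos_iff.mp hpos
    have hq0 : q a0 = true ∧ a0 ∈ OpS := by simpa using ha0p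
    have hopen0 : IsOpenCall tr a0 := (hOpS_mem a0).mp hq0.2
    obtain ⟨t0, m0, hcall0, -⟩ := hopen0
    have hopen0 : IsOpenCall tr a0 := (hOpS_mem a0).mp hq0.2
    refine hbuild (OpS.erase a0) [Label.ret t0]
      (fun a ha => (hOpS_mem a).mp (Finset.mem_of_mem_erase ha))
      (fun lb hlb => ⟨t0, by simpa using hlb⟩)
      (Or.inr ⟨a0, t0, m0, rfl, hcall0, hopen0, Finset.notMem_erase a0 OpS,
        fun a ha => by
          by_cases h : a = a0
          · exact Or.inr h
          · exact Or.inl (Finset.mem_erase.mpr ⟨h, (hOpS_mem a).mpr ha⟩)⟩) ?_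
    rw [hcount]
    have htail0 : ([Label.ret t0] : List (Label Γ l (l + 2))).countP p0 = 0 := by
      simp [hp0]
    have hkey : (List.range n).countP (fun a => q a && !decide (a ∈ OpS.erase a0))
        = Cm + 1 := by
      rw [countP_split (fun a => q a && !decide (a ∈ OpS.erase a0))
        (fun a => decide (a = a0)) (List.range n)]
      have h1 : (List.range n).countP
          (fun a => (q a && !decide (a ∈ OpS.erase a0)) && decide (a = a0)) = 1 := by
        rw [List.countP_congr (q := fun a => decide (a = a0)) ?_]
        · exact countP_eq_one_nodup (List.nodup_range (n := n))
            (List.mem_range.mpr (hOpLt a0 hopen0))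
        · intro a _
          constructor
          · intro h
            simp only [Bool.and_eq_true] at h
            exact h.2
          · intro h
            have ha : a = a0 := of_decide_eq_true h
            subst ha
            simp [hq0.1, Finset.notMem_erase]
      have h2 : (List.range n).countP
          (fun a => (q a && !decide (a ∈ OpS.erase a0)) && !decide (a = a0)) = Cm := by
        refine List.countP_congr ?_
        intro a _
        by_cases h : a = a0
        · subst h
          simp [hq0.2]
        · simp [Finset.mem_erase, h]
      rw [h1, h2]
      omega
    rw [hkey, htail0, hCm]
    omega
  refine ⟨?_, ?_⟩
  · rw [hq, hsplit, hCm, hCop]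
  · intro a t hcall
    have hqa : q a = true := by
      rw [hqdef]
      simp only [hcall, Option.map_some, Option.getD_some]
      show decide (insName i = insName i) = true
      simp
    have hnotopen : ¬ IsOpenCall tr a := by
      intro hopen
      have hpos : 0 < Cop := List.countP_pos_iff.mpr
        ⟨a, List.mem_range.mpr (hOpLt a hopen), by
          simp [hqa, (hOpS_mem a).mpr hopen]⟩
      omega
    have H : ∃ b, nextB tr t a b = true := by
      by_contra hH
      exact hnotopen ⟨t, insName i, hcall, fun b lb hab hb hth =>
        hH ⟨b, nextB_iff.mpr ⟨hab, lb, hb, hth⟩⟩⟩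
    refine ⟨⟨a, Nat.find H, t, insName i⟩,
      ⟨(nextB_iff.mp (Nat.find_spec H)).1, hcall, hWF a t _ H hcall, ?_⟩, rfl⟩
    intro c lb hac hcf hgc hth
    exact absurd (nextB_iff.mpr ⟨hac, lb, hgc, hth⟩) (Nat.find_min H hcf)

end Paper
end

section
/- In every trace of Lib with k = l + 2 threads that is not linearizable w.r.t. S_N, the (unique) completed M_Tick method event and the (unique) completed M_i method events for i ∈ {1, …, l} pairwise overlap (none of them happens before another in the happens-before relation), and moreover each of these l + 1 events overlaps every completed method event of the trace. -/
namespace Paper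

section Aux
open Function List

variable {Γ : Type} {l k : ℕ}

/-- Execution actions: labelled call/return steps and unlabelled internal steps. -/
inductive Act (Γ : Type) (l k : ℕ) where
  | call (t : Fin k) (m : MName Γ l)
  | ret (t : Fin k)
  | int (t : Fin k) (m : MName Γ l) (pc pc' : ℕ) (d' : DVal)

/-- The label of an action (internal actions are unlabelled). -/
def lab : Act Γ l k → Option (Label Γ l k)
  | .call t m => some (.call t m)
  | .ret t => some (.ret t)
  | .int _ _ _ _ _ => none

/-- Single-step semantics on actions. -/
def AStep (c : LCfg Γ l k) (a : Act Γ l k) (c' : LCfg Γ l k) : Prop :=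
  match a with
  | .call t m => c.2 t = none ∧ c'.1 = c.1 ∧ c'.2 = Function.update c.2 t (some (m, 0))
  | .ret t => (∃ m, c.2 t = some (m, finalPC m)) ∧ c'.1 = c.1 ∧ c'.2 = Function.update c.2 t none
  | .int t m pc pc' d' => c.2 t = some (m, pc) ∧ mTrans m pc c.1 d' pc' ∧ c'.1 = d' ∧
      c'.2 = Function.update c.2 t (some (m, pc'))

/-- A run: a chain of action steps. -/
def ARun : LCfg Γ l k → List (Act Γ l k) → LCfg Γ l k → Prop
  | c, [], c' => c = c'
  | c, a :: as, c' => ∃ c1, AStep c a c1 ∧ ARun c1 as c'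

theorem steps_arun {c c' : LCfg Γ l k} {tr : List (Label Γ l k)} (h : Steps c tr c') :
    ∃ acts : List (Act Γ l k), ARun c acts c' ∧ acts.filterMap lab = tr := by
  induction h with
  | nil c => exact ⟨[], rfl, rfl⟩
  | call t m h hs ih =>
      obtain ⟨acts, hr, he⟩ := ih
      refine ⟨.call t m :: acts, ⟨_, ?_, hr⟩, by simp [List.filterMap_cons, lab, he]⟩
      exact ⟨h, rfl, rfl⟩
  | ret t m h hs ih =>
      obtain ⟨acts, hr, he⟩ := ih
      refine ⟨.ret t :: acts, ⟨_, ?_, hr⟩, by simp [List.filterMap_cons, lab, he]⟩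
      exact ⟨⟨m, h⟩, rfl, rfl⟩
  | internal d' t m pc pc' h ht hs ih =>
      obtain ⟨acts, hr, he⟩ := ih
      refine ⟨.int t m pc pc' d' :: acts, ⟨_, ?_, hr⟩, by simp [List.filterMap_cons, lab, he]⟩
      exact ⟨h, ht, rfl, rfl⟩

theorem arun_F {c c' : LCfg Γ l k} {acts : List (Act Γ l k)} (h : ARun c acts c') :
    ∃ F : ℕ → LCfg Γ l k, F 0 = c ∧
      (∀ n x, acts[n]? = some x → AStep (F n) x (F (n + 1))) ∧
      (∀ n, acts[n]? = none → F (n + 1) = F n) := by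
  induction acts generalizing c with
  | nil =>
      exact ⟨fun _ => c, rfl, fun n x hx => by simp at hx, fun n _ => rfl⟩
  | cons a as ih =>
      obtain ⟨c1, h1, hr⟩ := h
      obtain ⟨F, hF0, hFs, hFn⟩ := ih hr
      refine ⟨fun n => match n with | 0 => c | n + 1 => F n, rfl, ?_, ?_⟩
      · rintro (_ | n) x hx
        · simp at hx; subst hx; simpa [hF0] using h1
        · exact hFs n x (by simpa using hx)
      · rintro (_ | n) hx
        · simp at hx
        · exact hFn n (by simpa using hx)

/-- `posMap f xs a` is the position in `xs` of the `a`-th element kept by `filterMap f`. -/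
def posMap (f : α → Option β) : List α → ℕ → ℕ
  | [], _ => 0
  | x :: xs, a =>
      match f x, a with
      | some _, 0 => 0
      | some _, a + 1 => posMap f xs a + 1
      | none, a => posMap f xs a + 1

theorem posMap_get {α β : Type*} (f : α → Option β) :
    ∀ (xs : List α) (a : ℕ) (b : β), (xs.filterMap f)[a]? = some b →
      ∃ x, xs[posMap f xs a]? = some x ∧ f x = some b := by
  intro xs
  induction xs with
  | nil => intro a b hb; simp at hb
  | cons x xs ih =>
      intro a b hb
      rcases hfx : f x with _ | y
      · rw [List.filterMap_cons] at hb; rw [hfx] at hb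
        obtain ⟨z, hz, hfz⟩ := ih a b hb
        exact ⟨z, by simpa [posMap, hfx] using hz, hfz⟩
      · rw [List.filterMap_cons] at hb; rw [hfx] at hb
        cases a with
        | zero => simp at hb; subst hb; exact ⟨x, by simp [posMap, hfx], hfx⟩
        | succ a =>
            simp at hb
            obtain ⟨z, hz, hfz⟩ := ih a b hb
            exact ⟨z, by simpa [posMap, hfx] using hz, hfz⟩

theorem posMap_mono {α β : Type*} (f : α → Option β) :
    ∀ (xs : List α) (a a' : ℕ), a ≤ a' → posMap f xs a ≤ posMap f xs a' := by
  intro xs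
  induction xs with
  | nil => intro a a' _; simp [posMap]
  | cons x xs ih =>
      intro a a' h
      rcases hfx : f x with _ | y
      · simpa [posMap, hfx] using ih a a' h
      · cases a with
        | zero => cases a' <;> simp [posMap, hfx]
        | succ a =>
            cases a' with
            | zero => omega
            | succ a' => simpa [posMap, hfx] using ih a a' (by omega)

theorem posMap_strict {α β : Type*} (f : α → Option β) :
    ∀ (xs : List α) (a a' : ℕ), a < a' → a' < (xs.filterMap f).length →
      posMap f xs a < posMap f xs a' := by
  intro xs
  induction xs with
  | nil => intro a a' h h'; simp at h'
  | cons x xs ih =>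
      intro a a' h h'
      rcases hfx : f x with _ | y
      · rw [List.filterMap_cons, hfx] at h'
        simpa [posMap, hfx] using ih a a' h h'
      · rw [List.filterMap_cons, hfx] at h'
        cases a with
        | zero =>
            cases a' with
            | zero => omega
            | succ a' => simp [posMap, hfx]
        | succ a =>
            cases a' with
            | zero => omega
            | succ a' =>
                simp at h'
                simpa [posMap, hfx] using ih a a' (by omega) h'

theorem posMap_surj {α β : Type*} (f : α → Option β) :
    ∀ (xs : List α) (c : ℕ) (x : α) (b : β), xs[c]? = some x → f x = some b →
      ∃ a, posMap f xs a = c ∧ (xs.filterMap f)[a]? = some b := by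
  intro xs
  induction xs with
  | nil => intro c x b hc _; simp at hc
  | cons z xs ih =>
      intro c x b hc hb
      cases c with
      | zero =>
          simp at hc; subst hc
          exact ⟨0, by simp [posMap, hb], by simp [List.filterMap_cons, hb]⟩
      | succ c =>
          simp at hc
          obtain ⟨a, ha, hget⟩ := ih c x b hc hb
          rcases hfz : f z with _ | y
          · exact ⟨a, by simp [posMap, hfz, ha], by simp [List.filterMap_cons, hfz, hget]⟩
          · exact ⟨a + 1, by simp [posMap, hfz, ha], by simp [List.filterMap_cons, hfz, hget]⟩

theorem filterMap_getElem?_range {α : Type*} (h : List α) :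
    (List.range h.length).filterMap (fun a => h[a]?) = h := by
  induction h with
  | nil => simp
  | cons x xs ih =>
      rw [List.length_cons, List.range_succ_eq_map, List.filterMap_cons, List.filterMap_map]
      have he : ((fun a => (x :: xs)[a]?) ∘ Nat.succ) = fun a => xs[a]? := by
        funext a; simp
      rw [he]; simpa using ih

theorem deletePositions_empty {α : Type} (h : List α) : deletePositions h ∅ = h := by
  unfold deletePositions
  simpa using filterMap_getElem?_range h

end Aux
section RunAnalysis
open Function List

variable {Γ : Type} {l k : ℕ}

/-- Boundary (call or return) actions of a thread. -/
def IsBdry (t : Fin k) : Act Γ l k → Prop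
  | .call t' _ => t' = t
  | .ret t' => t' = t
  | .int _ _ _ _ _ => False

variable {acts : List (Act Γ l k)} {F : ℕ → LCfg Γ l k}

theorem active_origin
    (hF0 : F 0 = ((DVal.Begin, fun _ => none) : LCfg Γ l k))
    (hS : ∀ n x, acts[n]? = some x → AStep (F n) x (F (n + 1)))
    (hN : ∀ n, acts[n]? = none → F (n + 1) = F n) :
    ∀ n t m pc, (F n).2 t = some (m, pc) →
      ∃ j, j < n ∧ acts[j]? = some (.call t m) ∧
        ∀ i x, j < i → i < n → acts[i]? = some x → ¬ IsBdry t x := by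
  intro n
  induction n with
  | zero => intro t m pc h; rw [hF0] at h; simp at h
  | succ n ih =>
      intro t m pc h
      rcases ha : acts[n]? with _ | a
      · rw [hN n ha] at h
        obtain ⟨j, hj, hc, hint⟩ := ih t m pc h
        exact ⟨j, by omega, hc, fun i x h1 h2 hx => by
          rcases Nat.lt_succ_iff_lt_or_eq.mp h2 with h2 | rfl
          · exact hint i x h1 h2 hx
          · rw [hx] at ha; simp at ha⟩
      · have hst := hS n a ha
        cases a with
        | call t' m' =>
            obtain ⟨hpre, hv, hupd⟩ := hst
            rw [hupd] at h
            by_cases htt : t = t'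
            · subst htt
              rw [Function.update_self] at h
              obtain ⟨rfl, rfl⟩ : m' = m ∧ (0 : ℕ) = pc := by
                injection h with h'; exact ⟨congrArg Prod.fst h', congrArg Prod.snd h'⟩
              exact ⟨n, by omega, ha, fun i x h1 h2 => by omega⟩
            · rw [Function.update_of_ne htt] at h
              obtain ⟨j, hj, hc, hint⟩ := ih t m pc h
              refine ⟨j, by omega, hc, fun i x h1 h2 hx => ?_⟩
              rcases Nat.lt_succ_iff_lt_or_eq.mp h2 with h2 | rfl
              · exact hint i x h1 h2 hx
              · rw [hx] at ha; injection ha with ha; subst ha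
                simp [IsBdry]; exact fun hh => htt hh.symm
        | ret t' =>
            obtain ⟨hpre, hv, hupd⟩ := hst
            rw [hupd] at h
            by_cases htt : t = t'
            · subst htt; rw [Function.update_self] at h; simp at h
            · rw [Function.update_of_ne htt] at h
              obtain ⟨j, hj, hc, hint⟩ := ih t m pc h
              refine ⟨j, by omega, hc, fun i x h1 h2 hx => ?_⟩
              rcases Nat.lt_succ_iff_lt_or_eq.mp h2 with h2 | rfl
              · exact hint i x h1 h2 hx
              · rw [hx] at ha; injection ha with ha; subst ha
                simp [IsBdry]; exact fun hh => htt hh.symm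
        | int t' m₀ pc0 pc1 d' =>
            obtain ⟨hpre, htr, hv, hupd⟩ := hst
            rw [hupd] at h
            by_cases htt : t = t'
            · subst htt
              rw [Function.update_self] at h
              obtain ⟨rfl, rfl⟩ : m₀ = m ∧ pc1 = pc := by
                injection h with h'; exact ⟨congrArg Prod.fst h', congrArg Prod.snd h'⟩
              obtain ⟨j, hj, hc, hint⟩ := ih t m₀ pc0 hpre
              refine ⟨j, by omega, hc, fun i x h1 h2 hx => ?_⟩
              rcases Nat.lt_succ_iff_lt_or_eq.mp h2 with h2 | rfl
              · exact hint i x h1 h2 hx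
              · rw [hx] at ha; injection ha with ha; subst ha; simp [IsBdry]
            · rw [Function.update_of_ne htt] at h
              obtain ⟨j, hj, hc, hint⟩ := ih t m pc h
              refine ⟨j, by omega, hc, fun i x h1 h2 hx => ?_⟩
              rcases Nat.lt_succ_iff_lt_or_eq.mp h2 with h2 | rfl
              · exact hint i x h1 h2 hx
              · rw [hx] at ha; injection ha with ha; subst ha; simp [IsBdry]

theorem persist
    (hS : ∀ n x, acts[n]? = some x → AStep (F n) x (F (n + 1)))
    (hN : ∀ n, acts[n]? = none → F (n + 1) = F n) :
    ∀ (x y : ℕ) (t : Fin k) (m : MName Γ l) (pc : ℕ), x ≤ y →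
      (F x).2 t = some (m, pc) →
      (∀ i a, x ≤ i → i < y → acts[i]? = some a → ¬ IsBdry t a) →
      ∃ pc', (F y).2 t = some (m, pc') := by
  intro x y
  induction y with
  | zero =>
      intro t m pc hxy h _
      have hx0 : x = 0 := Nat.le_zero.mp hxy
      subst hx0; exact ⟨pc, h⟩
  | succ y ih =>
      intro t m pc hxy h hb
      rcases Nat.lt_succ_iff_lt_or_eq.mp (Nat.lt_succ_of_le hxy) with hxy' | rfl
      · have hxy2 : x ≤ y := by omega
        obtain ⟨pc2, h2⟩ := ih t m pc hxy2 h (fun i a h1 h2 => hb i a h1 (by omega))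
        rcases ha : acts[y]? with _ | a
        · exact ⟨pc2, by rw [hN y ha]; exact h2⟩
        · have hst := hS y a ha
          cases a with
          | call t' m' =>
              obtain ⟨hpre, hv, hupd⟩ := hst
              by_cases htt : t = t'
              · exact absurd (hb y _ hxy2 (by omega) ha) (by simp [IsBdry, htt.symm])
              · exact ⟨pc2, by rw [hupd, Function.update_of_ne htt]; exact h2⟩
          | ret t' =>
              obtain ⟨hpre, hv, hupd⟩ := hst
              by_cases htt : t = t'
              · exact absurd (hb y _ hxy2 (by omega) ha) (by simp [IsBdry, htt.symm])
              · exact ⟨pc2, by rw [hupd, Function.update_of_ne htt]; exact h2⟩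
          | int t' m₀ pc0 pc1 d' =>
              obtain ⟨hpre, htr, hv, hupd⟩ := hst
              by_cases htt : t = t'
              · subst htt
                rw [h2] at hpre
                obtain ⟨rfl, rfl⟩ : m = m₀ ∧ pc2 = pc0 := by
                  injection hpre with h'
                  exact ⟨congrArg Prod.fst h', congrArg Prod.snd h'⟩
                exact ⟨pc1, by rw [hupd, Function.update_self]⟩
              · exact ⟨pc2, by rw [hupd, Function.update_of_ne htt]; exact h2⟩
      · exact ⟨pc, h⟩

theorem first_diff
    (hS : ∀ n x, acts[n]? = some x → AStep (F n) x (F (n + 1)))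
    (hN : ∀ n, acts[n]? = none → F (n + 1) = F n) :
    ∀ (y x : ℕ) (t : Fin k) (m : MName Γ l) (pc : ℕ), x ≤ y →
      (F x).2 t = some (m, pc) → (F y).2 t ≠ some (m, pc) →
      (∀ i a, x ≤ i → i < y → acts[i]? = some a → ¬ IsBdry t a) →
      ∃ z pc' d', x ≤ z ∧ z < y ∧ (F z).2 t = some (m, pc) ∧
        acts[z]? = some (.int t m pc pc' d') ∧ mTrans m pc (F z).1 d' pc' ∧
        (F (z + 1)).2 t = some (m, pc') ∧ (F (z + 1)).1 = d' := by
  intro y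
  induction y with
  | zero => intro x t m pc hxy h hne _; rw [Nat.le_zero.mp hxy] at h; exact absurd h hne
  | succ y ih =>
      intro x t m pc hxy h hne hb
      have hxy' : x ≤ y := by
        rcases Nat.lt_succ_iff_lt_or_eq.mp (Nat.lt_succ_of_le hxy) with h' | rfl
        · omega
        · exact absurd h hne
      by_cases hy : (F y).2 t = some (m, pc)
      · rcases ha : acts[y]? with _ | a
        · exact absurd (by rw [hN y ha]; exact hy) hne
        · have hst := hS y a ha
          cases a with
          | call t' m' =>
              by_cases htt : t = t'
              · exact absurd (hb y _ hxy' (by omega) ha) (by simp [IsBdry, htt.symm])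
              · obtain ⟨hpre, hv, hupd⟩ := hst
                exact absurd (by rw [hupd, Function.update_of_ne htt]; exact hy) hne
          | ret t' =>
              by_cases htt : t = t'
              · exact absurd (hb y _ hxy' (by omega) ha) (by simp [IsBdry, htt.symm])
              · obtain ⟨hpre, hv, hupd⟩ := hst
                exact absurd (by rw [hupd, Function.update_of_ne htt]; exact hy) hne
          | int t' m₀ pc0 pc1 d' =>
              obtain ⟨hpre, htr, hv, hupd⟩ := hst
              by_cases htt : t = t'
              · subst htt
                rw [hy] at hpre
                obtain ⟨rfl, rfl⟩ : m = m₀ ∧ pc = pc0 := by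
                  injection hpre with h'
                  exact ⟨congrArg Prod.fst h', congrArg Prod.snd h'⟩
                exact ⟨y, pc1, d', hxy', by omega, hy, ha, htr,
                  by rw [hupd, Function.update_self], hv⟩
              · exact absurd (by rw [hupd, Function.update_of_ne htt]; exact hy) hne
      · obtain ⟨z, pc', d', hz1, hz2, hrest⟩ :=
          ih x t m pc hxy' h hy (fun i a h1 h2 => hb i a h1 (by omega))
        exact ⟨z, pc', d', hz1, by omega, hrest⟩

theorem none_from_some
    (hS : ∀ n x, acts[n]? = some x → AStep (F n) x (F (n + 1)))
    (hN : ∀ n, acts[n]? = none → F (n + 1) = F n) :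
    ∀ (y x : ℕ) (t : Fin k) (s : MName Γ l × ℕ), x ≤ y →
      (F x).2 t = some s → (F y).2 t = none →
      ∃ z, x ≤ z ∧ z < y ∧ acts[z]? = some (.ret t) := by
  intro y
  induction y with
  | zero => intro x t s hxy h h0; rw [Nat.le_zero.mp hxy] at h; rw [h] at h0; simp at h0
  | succ y ih =>
      intro x t s hxy h h0
      have hxy' : x ≤ y := by
        rcases Nat.lt_succ_iff_lt_or_eq.mp (Nat.lt_succ_of_le hxy) with h' | rfl
        · omega
        · rw [h] at h0; simp at h0
      rcases hy : (F y).2 t with _ | s'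
      · obtain ⟨z, hz1, hz2, hz3⟩ := ih x t s hxy' h hy
        exact ⟨z, hz1, by omega, hz3⟩
      · rcases ha : acts[y]? with _ | a
        · rw [hN y ha, hy] at h0; simp at h0
        · have hst := hS y a ha
          cases a with
          | call t' m' =>
              obtain ⟨hpre, hv, hupd⟩ := hst
              by_cases htt : t = t'
              · subst htt; rw [hpre] at hy; simp at hy
              · rw [hupd, Function.update_of_ne htt, hy] at h0; simp at h0
          | ret t' =>
              by_cases htt : t = t'
              · exact ⟨y, hxy', by omega, htt ▸ ha⟩
              · obtain ⟨hpre, hv, hupd⟩ := hst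
                rw [hupd, Function.update_of_ne htt, hy] at h0; simp at h0
          | int t' m₀ pc0 pc1 d' =>
              obtain ⟨hpre, htr, hv, hupd⟩ := hst
              by_cases htt : t = t'
              · subst htt; rw [hupd, Function.update_self] at h0; simp at h0
              · rw [hupd, Function.update_of_ne htt, hy] at h0; simp at h0

end RunAnalysis
section TickAnalysis
open Function List

variable {Γ : Type} {l k : ℕ} {acts : List (Act Γ l k)} {F : ℕ → LCfg Γ l k}

theorem tick_thread_unique
    (hF0 : F 0 = ((DVal.Begin, fun _ => none) : LCfg Γ l k))
    (hS : ∀ n x, acts[n]? = some x → AStep (F n) x (F (n + 1)))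
    (hN : ∀ n, acts[n]? = none → F (n + 1) = F n)
    (hU : ∀ (c c' : ℕ) (t t' : Fin k), acts[c]? = some (Act.call t tickName) →
      acts[c']? = some (Act.call t' tickName) → c = c')
    {n : ℕ} {t t' : Fin k} {pc pc' : ℕ}
    (h : (F n).2 t = some (tickName, pc)) (h' : (F n).2 t' = some (tickName, pc')) :
    t = t' := by
  obtain ⟨j, _, hc, _⟩ := active_origin hF0 hS hN n t tickName pc h
  obtain ⟨j', _, hc', _⟩ := active_origin hF0 hS hN n t' tickName pc' h'
  have := hU j j' t t' hc hc'
  subst this; rw [hc] at hc'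
  injection hc' with hc'; injection hc'

/-- The central invariant relating the shared value to the state of the
(unique) tick instance. -/
theorem psi
    (hF0 : F 0 = ((DVal.Begin, fun _ => none) : LCfg Γ l k))
    (hS : ∀ n x, acts[n]? = some x → AStep (F n) x (F (n + 1)))
    (hN : ∀ n, acts[n]? = none → F (n + 1) = F n)
    (hU : ∀ (c c' : ℕ) (t t' : Fin k), acts[c]? = some (Act.call t tickName) →
      acts[c']? = some (Act.call t' tickName) → c = c') :
    ∀ n, ((F n).1 = DVal.Begin ∧ ∀ t pc, (F n).2 t = some (tickName, pc) → pc = 0)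
      ∨ ((F n).1 = DVal.Run ∧ ∃ t, (F n).2 t = some (tickName, 1))
      ∨ ((F n).1 = DVal.End ∧ (∀ t pc, (F n).2 t = some (tickName, pc) → pc = 2) ∧
          ∃ j t, j < n ∧ acts[j]? = some (.call t tickName)) := by
  intro n
  induction n with
  | zero => left; rw [hF0]; exact ⟨rfl, fun t pc h => by simp at h⟩
  | succ n ih =>
      rcases ha : acts[n]? with _ | a
      · rw [hN n ha]
        rcases ih with h | h | ⟨h1, h2, j, t, hj, hc⟩
        · exact Or.inl h
        · exact Or.inr (Or.inl h)
        · exact Or.inr (Or.inr ⟨h1, h2, j, t, by omega, hc⟩)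
      · have hst := hS n a ha
        cases a with
        | call t' m' =>
            obtain ⟨hpre, hv, hupd⟩ := hst
            rcases ih with ⟨h1, h2⟩ | ⟨h1, t₀, h2⟩ | ⟨h1, h2, j, t₁, hj, hc⟩
            · left
              refine ⟨by rw [hv, h1], fun t pc h => ?_⟩
              rw [hupd, Function.update_apply] at h
              split_ifs at h with hteq
              · injection h with h'; exact (congrArg Prod.snd h').symm
              · exact h2 t pc h
            · right; left
              refine ⟨by rw [hv, h1], t₀, ?_⟩
              rw [hupd, Function.update_apply]
              split_ifs with hteq
              · subst hteq; rw [hpre] at h2; simp at h2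
              · exact h2
            · right; right
              refine ⟨by rw [hv, h1], fun t pc h => ?_, j, t₁, by omega, hc⟩
              rw [hupd, Function.update_apply] at h
              split_ifs at h with hteq
              · -- a second tick call: contradiction with uniqueness
                injection h with h'
                have hm : m' = tickName := congrArg Prod.fst h'
                subst hm
                have := hU n j t' t₁ ha hc
                omega
              · exact h2 t pc h
        | ret t' =>
            obtain ⟨hpre, hv, hupd⟩ := hst
            rcases ih with ⟨h1, h2⟩ | ⟨h1, t₀, h2⟩ | ⟨h1, h2, j, t₁, hj, hc⟩
            · left
              refine ⟨by rw [hv, h1], fun t pc h => ?_⟩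
              rw [hupd, Function.update_apply] at h
              split_ifs at h with hteq
              all_goals first | exact h2 t pc h | simp at h
            · right; left
              refine ⟨by rw [hv, h1], t₀, ?_⟩
              rw [hupd, Function.update_apply]
              split_ifs with hteq
              · subst hteq
                obtain ⟨m, hm⟩ := hpre
                rw [h2] at hm
                injection hm with hm'
                have h3 : tickName (Γ := Γ) (l := l) = m := congrArg Prod.fst hm'
                have h4 : 1 = finalPC m := congrArg Prod.snd hm'
                rw [← h3] at h4; simp [finalPC, tickName] at h4
              · exact h2
            · right; right
              refine ⟨by rw [hv, h1], fun t pc h => ?_, j, t₁, by omega, hc⟩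
              rw [hupd, Function.update_apply] at h
              split_ifs at h with hteq
              all_goals first | exact h2 t pc h | simp at h
        | int t' m₀ pc0 pc1 d' =>
            obtain ⟨hpre, htr, hv, hupd⟩ := hst
            rcases m₀ with mγ | u
            · -- non-tick methods do not change the value
              have hd : d' = (F n).1 := by
                rcases mγ with γ | i
                · exact htr.2.2.2
                · rcases htr with h' | h' <;> exact h'.2.2.2
              have hnt : ∀ t pc, (Function.update (F n).2 t' (some (Sum.inl mγ, pc1))) t
                  = some (tickName, pc) → (F n).2 t = some (tickName, pc) := by
                intro t pc h
                rw [Function.update_apply] at h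
                split_ifs at h with hteq
                · injection h with h'
                  have := congrArg Prod.fst h'; simp [tickName] at this
                · exact h
              rcases ih with ⟨h1, h2⟩ | ⟨h1, t₀, h2⟩ | ⟨h1, h2, j, t₁, hj, hc⟩
              · left
                refine ⟨by rw [hv, hd, h1], fun t pc h => h2 t pc (hnt t pc (by rw [← hupd]; exact h))⟩
              · right; left
                refine ⟨by rw [hv, hd, h1], t₀, ?_⟩
                rw [hupd, Function.update_apply]
                split_ifs with hteq
                · subst hteq; rw [hpre] at h2
                  injection h2 with h'
                  have := congrArg Prod.fst h'; simp [tickName] at this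
                · exact h2
              · right; right
                exact ⟨by rw [hv, hd, h1], fun t pc h => h2 t pc (hnt t pc (by rw [← hupd]; exact h)),
                  j, t₁, by omega, hc⟩
            · -- tick transition
              have hu : Sum.inr u = tickName (Γ := Γ) (l := l) := by cases u; rfl
              rw [hu] at hpre hupd htr
              rcases htr with ⟨hpc0, hpc1, hd'⟩ | ⟨hpc0, hpc1, hd'⟩
              · -- write Run
                subst hpc0; subst hpc1; subst hd'
                right; left
                refine ⟨by rw [hv], t', by rw [hupd, Function.update_self]⟩
              · -- write End
                subst hpc0; subst hpc1; subst hd'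
                right; right
                obtain ⟨j, hj, hc, _⟩ := active_origin hF0 hS hN n t' tickName 1 hpre
                refine ⟨by rw [hv], fun t pc h => ?_, j, t', by omega, hc⟩
                rw [hupd, Function.update_apply] at h
                split_ifs at h with hteq
                · injection h with h'; exact (congrArg Prod.snd h').symm
                · have := tick_thread_unique hF0 hS hN hU h hpre
                  exact absurd this hteq
  
theorem begin_mono
    (hS : ∀ n x, acts[n]? = some x → AStep (F n) x (F (n + 1)))
    (hN : ∀ n, acts[n]? = none → F (n + 1) = F n) :
    ∀ x y, x ≤ y → (F x).1 ≠ DVal.Begin → (F y).1 ≠ DVal.Begin := by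
  intro x y
  induction y with
  | zero => intro h hx; have : x = 0 := by omega
            subst this; exact hx
  | succ y ih =>
      intro hxy hx
      rcases Nat.lt_succ_iff_lt_or_eq.mp (Nat.lt_succ_of_le hxy) with h' | rfl
      · have hy := ih (by omega) hx
        rcases ha : acts[y]? with _ | a
        · rw [hN y ha]; exact hy
        · have hst := hS y a ha
          cases a with
          | call t' m' => rw [hst.2.1]; exact hy
          | ret t' => rw [hst.2.1]; exact hy
          | int t' m₀ pc0 pc1 d' =>
              obtain ⟨hpre, htr, hv, hupd⟩ := hst
              rw [hv]
              rcases m₀ with mγ | u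
              · have hd : d' = (F y).1 := by
                  rcases mγ with γ | i
                  · exact htr.2.2.2
                  · rcases htr with h' | h' <;> exact h'.2.2.2
                rw [hd]; exact hy
              · rcases htr with ⟨_, _, hd'⟩ | ⟨_, _, hd'⟩ <;> (subst hd'; simp)
      · exact hx

theorem end_mono
    (hF0 : F 0 = ((DVal.Begin, fun _ => none) : LCfg Γ l k))
    (hS : ∀ n x, acts[n]? = some x → AStep (F n) x (F (n + 1)))
    (hN : ∀ n, acts[n]? = none → F (n + 1) = F n)
    (hU : ∀ (c c' : ℕ) (t t' : Fin k), acts[c]? = some (Act.call t tickName) →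
      acts[c']? = some (Act.call t' tickName) → c = c') :
    ∀ x y, x ≤ y → (F x).1 = DVal.End → (F y).1 = DVal.End := by
  intro x y
  induction y with
  | zero => intro h hx; have : x = 0 := by omega
            subst this; exact hx
  | succ y ih =>
      intro hxy hx
      rcases Nat.lt_succ_iff_lt_or_eq.mp (Nat.lt_succ_of_le hxy) with h' | rfl
      · have hy := ih (by omega) hx
        rcases ha : acts[y]? with _ | a
        · rw [hN y ha]; exact hy
        · have hst := hS y a ha
          cases a with
          | call t' m' => rw [hst.2.1]; exact hy
          | ret t' => rw [hst.2.1]; exact hy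
          | int t' m₀ pc0 pc1 d' =>
              obtain ⟨hpre, htr, hv, hupd⟩ := hst
              rw [hv]
              rcases m₀ with mγ | u
              · have hd : d' = (F y).1 := by
                  rcases mγ with γ | i
                  · exact htr.2.2.2
                  · rcases htr with h' | h' <;> exact h'.2.2.2
                rw [hd]; exact hy
              · have hu : Sum.inr u = tickName (Γ := Γ) (l := l) := by cases u; rfl
                rw [hu] at hpre htr
                rcases htr with ⟨hpc0, _, hd'⟩ | ⟨_, _, hd'⟩
                · -- write Run from a tick at pc 0: impossible when value is End
                  subst hpc0
                  rcases psi hF0 hS hN hU y with ⟨h1, _⟩ | ⟨h1, _⟩ | ⟨h1, h2, _⟩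
                  · rw [h1] at hy; exact absurd hy (by simp)
                  · rw [h1] at hy; exact absurd hy (by simp)
                  · have := h2 t' 0 hpre; omega
                · subst hd'; rfl
      · exact hx

theorem pc2_end
    (hF0 : F 0 = ((DVal.Begin, fun _ => none) : LCfg Γ l k))
    (hS : ∀ n x, acts[n]? = some x → AStep (F n) x (F (n + 1)))
    (hN : ∀ n, acts[n]? = none → F (n + 1) = F n)
    (hU : ∀ (c c' : ℕ) (t t' : Fin k), acts[c]? = some (Act.call t tickName) →
      acts[c']? = some (Act.call t' tickName) → c = c')
    {n : ℕ} {t : Fin k} (h : (F n).2 t = some (tickName, 2)) :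
    (F n).1 = DVal.End := by
  rcases psi hF0 hS hN hU n with ⟨h1, h2⟩ | ⟨h1, t₀, h2⟩ | ⟨h1, _, _⟩
  · have := h2 t 2 h; omega
  · have ht := tick_thread_unique hF0 hS hN hU h h2
    subst ht; rw [h] at h2; injection h2 with h2
    have := congrArg Prod.snd h2; omega
  · exact h1

end TickAnalysis
section Events
open List

/-- `LawfulBEq` for the derived `BEq` on sums. -/
instance sumLawfulBEq {α β : Type} [BEq α] [BEq β] [LawfulBEq α] [LawfulBEq β] :
    LawfulBEq (α ⊕ β) where
  eq_of_beq {a b} h := by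
    cases a with
    | inl x =>
        cases b with
        | inl y =>
            rw [show ((Sum.inl x : α ⊕ β) == Sum.inl y) = (x == y) from rfl] at h
            exact congrArg Sum.inl (eq_of_beq h)
        | inr y =>
            rw [show ((Sum.inl x : α ⊕ β) == Sum.inr y) = false from rfl] at h; cases h
    | inr x =>
        cases b with
        | inl y =>
            rw [show ((Sum.inr x : α ⊕ β) == Sum.inl y) = false from rfl] at h; cases h
        | inr y =>
            rw [show ((Sum.inr x : α ⊕ β) == Sum.inr y) = (x == y) from rfl] at h
            exact congrArg Sum.inr (eq_of_beq h)
  rfl {a} := by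
    cases a with
    | inl x =>
        rw [show ((Sum.inl x : α ⊕ β) == Sum.inl x) = (x == x) from rfl]
        exact beq_self_eq_true x
    | inr x =>
        rw [show ((Sum.inr x : α ⊕ β) == Sum.inr x) = (x == x) from rfl]
        exact beq_self_eq_true x

variable {Γ : Type} {l k : ℕ}

theorem mevent_callPos_lt {h : List (Label Γ l k)} {e : MEvent Γ l k}
    (he : IsMEvent h e) : e.callPos < h.length := by
  obtain ⟨hlt, -⟩ := List.getElem?_eq_some_iff.mp he.2.1
  exact hlt

theorem mevent_retPos_lt {h : List (Label Γ l k)} {e : MEvent Γ l k}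
    (he : IsMEvent h e) : e.retPos < h.length := by
  obtain ⟨hlt, -⟩ := List.getElem?_eq_some_iff.mp he.2.2.1
  exact hlt

theorem mevent_unique {h : List (Label Γ l k)} {e e' : MEvent Γ l k}
    (he : IsMEvent h e) (he' : IsMEvent h e') (hc : e.callPos = e'.callPos) : e = e' := by
  obtain ⟨hlt, hcall, hret, hbet⟩ := he
  obtain ⟨hlt', hcall', hret', hbet'⟩ := he'
  rw [hc, hcall'] at hcall
  injection hcall with hcall
  have hth : e'.thread = e.thread := by injection hcall
  have hnm : e'.name = e.name := by injection hcall
  have hrr : e.retPos = e'.retPos := by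
    rcases Nat.lt_trichotomy e.retPos e'.retPos with hlt2 | heq | hlt2
    · have := hbet' e.retPos (Label.ret e.thread) (by omega) hlt2 hret
      simp [threadOf, hth] at this
    · exact heq
    · have := hbet e'.retPos (Label.ret e'.thread) (by omega) hlt2 hret'
      simp [threadOf, hth] at this
  cases e; cases e'
  simp_all

open Classical in
/-- The list of all method events of a trace, ordered by call position. -/
noncomputable def eventsOf (h : List (Label Γ l k)) : List (MEvent Γ l k) :=
  (List.range h.length).filterMap
    (fun a => if hx : ∃ e : MEvent Γ l k, IsMEvent h e ∧ e.callPos = a then some hx.choose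
      else none)

open Classical in
theorem eventsOf_spec {h : List (Label Γ l k)} {a : ℕ} {e : MEvent Γ l k}
    (hsome : (if hx : ∃ e' : MEvent Γ l k, IsMEvent h e' ∧ e'.callPos = a then some hx.choose
      else none) = some e) : IsMEvent h e ∧ e.callPos = a := by
  by_cases hx : ∃ e' : MEvent Γ l k, IsMEvent h e' ∧ e'.callPos = a
  · rw [dif_pos hx] at hsome
    injection hsome with hsome
    exact hsome ▸ ⟨hx.choose_spec.1, hx.choose_spec.2⟩
  · rw [dif_neg hx] at hsome; cases hsome

theorem eventsOf_mem {h : List (Label Γ l k)} (e : MEvent Γ l k) :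
    IsMEvent h e ↔ e ∈ eventsOf h := by
  classical
  constructor
  · intro he
    have hmem : e.callPos ∈ List.range h.length := List.mem_range.mpr (mevent_callPos_lt he)
    have hx : ∃ e' : MEvent Γ l k, IsMEvent h e' ∧ e'.callPos = e.callPos := ⟨e, he, rfl⟩
    refine List.mem_filterMap.mpr ⟨e.callPos, hmem, ?_⟩
    rw [dif_pos hx]
    have hspec := hx.choose_spec
    have : hx.choose = e := mevent_unique hspec.1 he hspec.2
    rw [this]
  · intro hmem
    obtain ⟨a, _, hsome⟩ := List.mem_filterMap.mp hmem
    exact (eventsOf_spec hsome).1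

theorem eventsOf_nodup (h : List (Label Γ l k)) : (eventsOf h).Nodup := by
  classical
  refine List.Nodup.filterMap ?_ (List.nodup_range (n := _))
  intro a a' e hae hae'
  simp only [Option.mem_def] at hae hae'
  have h1 := (eventsOf_spec hae).2
  have h2 := (eventsOf_spec hae').2
  omega

theorem eventsOf_pairwise (h : List (Label Γ l k)) :
    (eventsOf h).Pairwise (fun e e' => ¬ HB e' e) := by
  classical
  rw [eventsOf, List.pairwise_filterMap]
  refine (List.pairwise_lt_range (n := h.length)).imp_of_mem ?_
  intro a a' _ _ hlt e hae e' hae'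
  obtain ⟨he, hca⟩ := eventsOf_spec hae
  obtain ⟨he', hca'⟩ := eventsOf_spec hae'
  have h1 := he'.1
  intro hb
  unfold HB at hb
  omega

theorem count_two_of_mem {β : Type} [BEq β] [LawfulBEq β] {es : List (MEvent Γ l k)}
    {e1 e2 : MEvent Γ l k} (f : MEvent Γ l k → β)
    (h1 : e1 ∈ es) (h2 : e2 ∈ es) (hne : e1 ≠ e2) {b : β}
    (hb1 : f e1 = b) (hb2 : f e2 = b) : 2 ≤ (es.map f).count b := by
  obtain ⟨s, u, rfl⟩ := List.append_of_mem h1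
  have h2' : e2 ∈ s ∨ e2 ∈ u := by
    rcases List.mem_append.mp h2 with h | h
    · exact Or.inl h
    · rcases List.mem_cons.mp h with h | h
      · exact (hne h.symm).elim
      · exact Or.inr h
  have hsplit : (List.map f (s ++ e1 :: u)).count b =
      (s.map f).count b + (((e1 :: u)).map f).count b := by
    rw [List.map_append, List.count_append]
  rcases h2' with h | h
  · have hmem : b ∈ s.map f := List.mem_map.mpr ⟨e2, h, hb2⟩
    have hpos : 0 < (s.map f).count b := List.count_pos_iff.mpr hmem
    rw [hsplit, List.map_cons, hb1, List.count_cons_self]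
    omega
  · have hmem : b ∈ u.map f := List.mem_map.mpr ⟨e2, h, hb2⟩
    have hpos : 0 < (u.map f).count b := List.count_pos_iff.mpr hmem
    rw [hsplit, List.map_cons, hb1, List.count_cons_self]
    omega

end Events
section Completion
open List

variable {Γ : Type} {l k : ℕ}

/-- The completing tail: one return for every thread. -/
def compTail (Γ : Type) (l k : ℕ) : List (Label Γ l k) :=
  (List.finRange k).map Label.ret

theorem compTail_get (t : Fin k) : (compTail Γ l k)[t.1]? = some (Label.ret t) := by
  unfold compTail
  rw [List.getElem?_map]
  have h1 : t.1 < (List.finRange k).length := by simp [t.2]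
  have h2 : (List.finRange k)[t.1]? = some ((List.finRange k)[t.1]) := by
    rw [List.getElem?_eq_some_iff]; exact ⟨h1, rfl⟩
  rw [h2, List.getElem_finRange]
  simp [Fin.ext_iff]

theorem compTail_all_ret {lb : Label Γ l k} (h : lb ∈ compTail Γ l k) :
    ∃ t, lb = Label.ret t := by
  obtain ⟨t, _, rfl⟩ := List.mem_map.mp h
  exact ⟨t, rfl⟩

theorem compTail_get_ret {i : ℕ} {lb : Label Γ l k} (h : (compTail Γ l k)[i]? = some lb) :
    ∃ t, lb = Label.ret t := by
  have : lb ∈ compTail Γ l k := by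
    obtain ⟨hlt, hget⟩ := List.getElem?_eq_some_iff.mp h
    exact hget ▸ List.getElem_mem hlt
  exact compTail_all_ret this

theorem complete_append_tail (tr : List (Label Γ l k)) :
    CompleteTrace (tr ++ compTail Γ l k) := by
  intro a hopen
  obtain ⟨t, m, hget, hno⟩ := hopen
  by_cases hlt : a < tr.length
  · have hb : (tr ++ compTail Γ l k)[tr.length + t.1]? = some (Label.ret t) := by
      rw [List.getElem?_append_right (by omega)]
      simpa using compTail_get t
    exact hno (tr.length + t.1) (Label.ret t) (by omega) hb rfl
  · rw [List.getElem?_append_right (by omega)] at hget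
    obtain ⟨t', ht'⟩ := compTail_get_ret hget
    cases ht'

theorem completionOf_append_tail (tr : List (Label Γ l k)) :
    CompletionOf tr (tr ++ compTail Γ l k) := by
  refine ⟨∅, compTail Γ l k, by simp, fun lb hlb => compTail_all_ret hlb, ?_,
    complete_append_tail tr⟩
  rw [deletePositions_empty]

/-- In the tail-completed trace, every call of the original trace is matched,
provided calls of the same thread are separated by returns. -/
theorem call_matched
    (tr : List (Label Γ l k))
    (WF : ∀ (a b : ℕ) (t : Fin k) (m m' : MName Γ l), tr[a]? = some (Label.call t m) →
      tr[b]? = some (Label.call t m') → a < b → ∃ c, a < c ∧ c < b ∧ tr[c]? = some (Label.ret t))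
    {a : ℕ} {t : Fin k} {m : MName Γ l} (ha : tr[a]? = some (Label.call t m)) :
    ∃ e : MEvent Γ l k, IsMEvent (tr ++ compTail Γ l k) e ∧ e.callPos = a ∧ e.name = m := by
  classical
  have halt : a < tr.length := (List.getElem?_eq_some_iff.mp ha).1
  have hP : ∃ b, a < b ∧
      ∃ lb : Label Γ l k, (tr ++ compTail Γ l k)[b]? = some lb ∧ threadOf lb = t := by
    refine ⟨tr.length + t.1, by omega, Label.ret t, ?_, rfl⟩
    rw [List.getElem?_append_right (by omega)]
    simpa using compTail_get t
  obtain ⟨hab, lb, hlb, hth⟩ := Nat.find_spec hP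
  have hmin : ∀ c, c < Nat.find hP → ¬ (a < c ∧
      ∃ lb' : Label Γ l k, (tr ++ compTail Γ l k)[c]? = some lb' ∧ threadOf lb' = t) :=
    fun c hc => Nat.find_min hP hc
  have hbet : ∀ (c : ℕ) (lb' : Label Γ l k), a < c → c < Nat.find hP →
      (tr ++ compTail Γ l k)[c]? = some lb' → threadOf lb' ≠ t := by
    intro c lb' h1c h2c hlb' hth'
    exact hmin c h2c ⟨h1c, lb', hlb', hth'⟩
  cases lb with
  | ret t'' =>
      rw [show t'' = t from hth] at hlb
      refine ⟨⟨a, Nat.find hP, t, m⟩, ⟨hab, ?_, hlb, hbet⟩, rfl, rfl⟩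
      rw [List.getElem?_append_left halt]; exact ha
  | call t'' m' =>
      exfalso
      rw [show t'' = t from hth] at hlb
      by_cases hblt : Nat.find hP < tr.length
      · rw [List.getElem?_append_left hblt] at hlb
        obtain ⟨c, hc1, hc2, hc3⟩ := WF a (Nat.find hP) t m m' ha hlb hab
        exact hmin c hc2 ⟨hc1, Label.ret t, by
          rw [List.getElem?_append_left (by omega)]; exact hc3, rfl⟩
      · rw [List.getElem?_append_right (by omega)] at hlb
        obtain ⟨t''', ht'''⟩ := compTail_get_ret hlb
        cases ht'''

theorem linearizable_of_two_calls [DecidableEq Γ] {σ : Type} {Nfa : NFA (Γ ⊕ Fin l) σ}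
    (tr : List (Label Γ l k))
    (WF : ∀ (a b : ℕ) (t : Fin k) (m m' : MName Γ l), tr[a]? = some (Label.call t m) →
      tr[b]? = some (Label.call t m') → a < b → ∃ c, a < c ∧ c < b ∧ tr[c]? = some (Label.ret t))
    (m₀ : MName Γ l)
    (hm₀ : ∀ ws : List (MName Γ l), ws.count m₀ ≠ 1 → ws ∈ SpecN Nfa)
    {a a' : ℕ} {t t' : Fin k}
    (ha : tr[a]? = some (Label.call t m₀)) (ha' : tr[a']? = some (Label.call t' m₀))
    (hne : a ≠ a') : Linearizable tr (SpecN Nfa) := by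
  classical
  obtain ⟨e1, he1, hc1, hn1⟩ := call_matched tr WF ha
  obtain ⟨e2, he2, hc2, hn2⟩ := call_matched tr WF ha'
  have hne12 : e1 ≠ e2 := fun h => hne (by rw [← hc1, ← hc2, h])
  refine ⟨tr ++ compTail Γ l k, completionOf_append_tail tr,
    eventsOf (tr ++ compTail Γ l k), eventsOf_nodup _,
    fun e => eventsOf_mem e, eventsOf_pairwise _, hm₀ _ ?_⟩
  have h2le : 2 ≤ ((eventsOf (tr ++ compTail Γ l k)).map MEvent.name).count m₀ :=
    count_two_of_mem MEvent.name ((eventsOf_mem e1).mp he1)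
      ((eventsOf_mem e2).mp he2) hne12 hn1 hn2
  omega

end Completion

/-- In every trace of `Lib` with `k = l + 2` threads that is
not linearizable w.r.t. `S_N`, the completed `M_Tick` method event and the
completed `M_i` method events pairwise overlap, and each of them overlaps
every completed method event of the trace (neither happens before the other). -/
theorem tick_and_insertion_events_overlap_all
    (Γ : Type) (instF : Fintype Γ) (instD : DecidableEq Γ) (l : ℕ)
    (σ : Type) (instσ : Fintype σ) (Nfa : NFA (Γ ⊕ Fin l) σ)
    (tr : List (Label Γ l (l + 2)))
    (htr : IsTrace tr) (hnl : ¬ Linearizable tr (SpecN Nfa)) :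
    ∀ e e' : MEvent Γ l (l + 2), IsMEvent tr e → IsMEvent tr e' →
      (e.name = tickName ∨ ∃ i : Fin l, e.name = insName i) →
      e ≠ e' →
      ¬ HB e e' ∧ ¬ HB e' e := by
  classical
  intro e e' he he' hsp hne
  obtain ⟨cend, hsteps⟩ := htr
  obtain ⟨acts, hrun, hfm⟩ := steps_arun hsteps
  obtain ⟨F, hF0, hS, hN⟩ := arun_F hrun
  -- basic transfer facts
  have hget : ∀ (a : ℕ) (lb0 : Label Γ l (l + 2)), tr[a]? = some lb0 →
      ∃ x, acts[posMap lab acts a]? = some x ∧ lab x = some lb0 := by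
    intro a lb0 h0
    exact posMap_get lab acts a lb0 (by rw [hfm]; exact h0)
  have hlab_call : ∀ (x : Act Γ l (l + 2)) (t : Fin (l + 2)) (m : MName Γ l),
      lab x = some (Label.call t m) → x = Act.call t m := by
    intro x t m hx
    cases x with
    | call t1 m1 => simp [lab] at hx; rw [hx.1, hx.2]
    | ret t1 => simp [lab] at hx
    | int t1 m1 p1 p2 d1 => simp [lab] at hx
  have hlab_ret : ∀ (x : Act Γ l (l + 2)) (t : Fin (l + 2)),
      lab x = some (Label.ret t) → x = Act.ret t := by
    intro x t hx
    cases x with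
    | call t1 m1 => simp [lab] at hx
    | ret t1 => simp [lab] at hx; rw [hx]
    | int t1 m1 p1 p2 d1 => simp [lab] at hx
  have hmono : ∀ a b : ℕ, a < b → b < tr.length →
      posMap lab acts a < posMap lab acts b := by
    intro a b hab hb
    exact posMap_strict lab acts a b hab (by rw [hfm]; exact hb)
  have hsurj : ∀ (c : ℕ) (x : Act Γ l (l + 2)) (lb0 : Label Γ l (l + 2)),
      acts[c]? = some x → lab x = some lb0 →
      ∃ a, posMap lab acts a = c ∧ tr[a]? = some lb0 := by
    intro c x lb0 hc hx
    obtain ⟨a, ha1, ha2⟩ := posMap_surj lab acts c x lb0 hc hx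
    rw [hfm] at ha2
    exact ⟨a, ha1, ha2⟩
  -- well-formedness: two calls of a thread are separated by a return
  have WF : ∀ (a b : ℕ) (t : Fin (l + 2)) (m m' : MName Γ l),
      tr[a]? = some (Label.call t m) → tr[b]? = some (Label.call t m') → a < b →
      ∃ c, a < c ∧ c < b ∧ tr[c]? = some (Label.ret t) := by
    intro a b t m m' ha hb hab
    have hblen : b < tr.length := (List.getElem?_eq_some_iff.mp hb).1
    obtain ⟨x, hxg, hxl⟩ := hget a _ ha
    rw [hlab_call x t m hxl] at hxg
    obtain ⟨y, hyg, hyl⟩ := hget b _ hb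
    rw [hlab_call y t m' hyl] at hyg
    have hAB : posMap lab acts a < posMap lab acts b := hmono a b hab hblen
    have hsome : (F (posMap lab acts a + 1)).2 t = some (m, 0) := by
      obtain ⟨_, _, hupd⟩ := hS _ _ hxg
      rw [hupd, Function.update_self]
    have hnone : (F (posMap lab acts b)).2 t = none := (hS _ _ hyg).1
    obtain ⟨z, hz1, hz2, hz3⟩ := none_from_some hS hN (posMap lab acts b)
      (posMap lab acts a + 1) t (m, 0) (by omega) hsome hnone
    obtain ⟨c, hc1, hc2⟩ := hsurj z _ (Label.ret t) hz3 rfl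
    have hac : a < c := by
      by_contra hcon
      have := posMap_mono lab acts c a (by omega)
      omega
    have hcb : c < b := by
      by_contra hcon
      have := posMap_mono lab acts b c (by omega)
      omega
    exact ⟨c, hac, hcb, hc2⟩
  -- uniqueness of the tick call (from non-linearizability)
  have hUtr : ∀ (a a' : ℕ) (t t' : Fin (l + 2)), tr[a]? = some (Label.call t tickName) →
      tr[a']? = some (Label.call t' tickName) → a = a' := by
    intro a a' t t' ha ha'
    by_contra hne'
    exact hnl (linearizable_of_two_calls tr WF tickName (fun ws hws => Or.inl hws) ha ha' hne')
  have hUacts : ∀ (c c' : ℕ) (t t' : Fin (l + 2)), acts[c]? = some (Act.call t tickName) →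
      acts[c']? = some (Act.call t' tickName) → c = c' := by
    intro c c' t t' hc hc'
    obtain ⟨a, ha1, ha2⟩ := hsurj c _ (Label.call t tickName) hc rfl
    obtain ⟨a', ha1', ha2'⟩ := hsurj c' _ (Label.call t' tickName) hc' rfl
    rw [← ha1, ← ha1', hUtr a a' t t' ha2 ha2']
  -- transfer of a method event to the action level
  have htrans : ∀ f : MEvent Γ l (l + 2), IsMEvent tr f →
      acts[posMap lab acts f.callPos]? = some (Act.call f.thread f.name) ∧
      acts[posMap lab acts f.retPos]? = some (Act.ret f.thread) ∧
      posMap lab acts f.callPos < posMap lab acts f.retPos ∧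
      (∀ i x, posMap lab acts f.callPos < i → i < posMap lab acts f.retPos →
        acts[i]? = some x → ¬ IsBdry f.thread x) ∧
      (F (posMap lab acts f.callPos + 1)).2 f.thread = some (f.name, 0) ∧
      (F (posMap lab acts f.retPos)).2 f.thread = some (f.name, finalPC f.name) := by
    intro f hf
    obtain ⟨hlt, hcall, hret, hbet⟩ := hf
    have hrlen : f.retPos < tr.length := (List.getElem?_eq_some_iff.mp hret).1
    obtain ⟨x, hxg, hxl⟩ := hget _ _ hcall
    rw [hlab_call x _ _ hxl] at hxg
    obtain ⟨y, hyg, hyl⟩ := hget _ _ hret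
    rw [hlab_ret y _ hyl] at hyg
    have hAB : posMap lab acts f.callPos < posMap lab acts f.retPos :=
      hmono _ _ hlt hrlen
    have hnb : ∀ i x, posMap lab acts f.callPos < i → i < posMap lab acts f.retPos →
        acts[i]? = some x → ¬ IsBdry f.thread x := by
      intro i x h1 h2 hxi hbd
      have hxlab : ∃ lb0 : Label Γ l (l + 2), lab x = some lb0 ∧ threadOf lb0 = f.thread := by
        cases x with
        | call t1 m1 => exact ⟨Label.call t1 m1, rfl, hbd⟩
        | ret t1 => exact ⟨Label.ret t1, rfl, hbd⟩
        | int t1 m1 p1 p2 d1 => exact hbd.elim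
      obtain ⟨lb0, hl1, hl2⟩ := hxlab
      obtain ⟨c, hc1, hc2⟩ := hsurj i x lb0 hxi hl1
      have hac : f.callPos < c := by
        by_contra hcon
        have := posMap_mono lab acts c f.callPos (by omega)
        omega
      have hcb : c < f.retPos := by
        by_contra hcon
        have := posMap_mono lab acts f.retPos c (by omega)
        omega
      exact hbet c lb0 hac hcb hc2 hl2
    have h0 : (F (posMap lab acts f.callPos + 1)).2 f.thread = some (f.name, 0) := by
      obtain ⟨_, _, hupd⟩ := hS _ _ hxg
      rw [hupd, Function.update_self]
    obtain ⟨⟨m', hm'⟩, _, _⟩ := hS _ _ hyg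
    obtain ⟨pc2, hpc2⟩ := persist hS hN (posMap lab acts f.callPos + 1)
      (posMap lab acts f.retPos) f.thread f.name 0 (by omega) h0
      (fun i a h1 h2 ha => hnb i a (by omega) h2 ha)
    rw [hpc2] at hm'
    have hmn : f.name = m' := congrArg Prod.fst (Option.some.inj hm')
    refine ⟨hxg, hyg, hAB, hnb, h0, ?_⟩
    rw [hpc2, hm']
    rw [← hmn]
  -- witness extraction for `M_γ` events: a read of `Run` strictly inside
  have hwitg : ∀ (f : MEvent Γ l (l + 2)), IsMEvent tr f → ∀ g : Γ,
      f.name = Sum.inl (Sum.inl g) →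
      ∃ z, posMap lab acts f.callPos < z ∧ z < posMap lab acts f.retPos ∧
        (F z).1 = DVal.Run ∧
        ∃ t1 m1 p1 p2 d1, acts[z]? = some (Act.int t1 m1 p1 p2 d1) := by
    intro f hf g hg
    obtain ⟨hA, hB, hAB, hnb, h0, hBst⟩ := htrans f hf
    rw [hg] at h0 hBst
    have hBne : (F (posMap lab acts f.retPos)).2 f.thread ≠
        some ((Sum.inl (Sum.inl g) : MName Γ l), 0) := by
      rw [hBst]; simp [finalPC]
    obtain ⟨z, pc', d', hz1, hz2, hzst, hzact, hztr, _, _⟩ :=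
      first_diff hS hN (posMap lab acts f.retPos) (posMap lab acts f.callPos + 1)
        f.thread (Sum.inl (Sum.inl g)) 0 (by omega) h0 hBne
        (fun i a h1 h2 ha => hnb i a (by omega) h2 ha)
    obtain ⟨_, _, hdrun, _⟩ := hztr
    exact ⟨z, by omega, hz2, hdrun, _, _, _, _, _, hzact⟩
  -- witness extraction for `M_i` events: reads of `Begin` and `End` inside
  have hwiti : ∀ (f : MEvent Γ l (l + 2)), IsMEvent tr f → ∀ i : Fin l,
      f.name = Sum.inl (Sum.inr i) →
      ∃ p q, posMap lab acts f.callPos < p ∧ p < q ∧ q < posMap lab acts f.retPos ∧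
        (F p).1 = DVal.Begin ∧ (F q).1 = DVal.End := by
    intro f hf i hi
    obtain ⟨hA, hB, hAB, hnb, h0, hBst⟩ := htrans f hf
    rw [hi] at h0 hBst
    have hBst2 : (F (posMap lab acts f.retPos)).2 f.thread =
        some ((Sum.inl (Sum.inr i) : MName Γ l), 2) := hBst
    have hBne : (F (posMap lab acts f.retPos)).2 f.thread ≠
        some ((Sum.inl (Sum.inr i) : MName Γ l), 0) := by
      rw [hBst2]; simp
    obtain ⟨p, pc', d', hp1, hp2, hpst, hpact, hptr, hpnext, _⟩ :=
      first_diff hS hN (posMap lab acts f.retPos) (posMap lab acts f.callPos + 1)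
        f.thread (Sum.inl (Sum.inr i)) 0 (by omega) h0 hBne
        (fun i' a h1 h2 ha => hnb i' a (by omega) h2 ha)
    rcases hptr with ⟨_, hpc', hdbeg, _⟩ | ⟨h10, _, _, _⟩
    · subst hpc'
      have hBne1 : (F (posMap lab acts f.retPos)).2 f.thread ≠
          some ((Sum.inl (Sum.inr i) : MName Γ l), 1) := by
        rw [hBst2]; simp
      obtain ⟨q, pc'', d'', hq1, hq2, hqst, hqact, hqtr, _, _⟩ :=
        first_diff hS hN (posMap lab acts f.retPos) (p + 1)
          f.thread (Sum.inl (Sum.inr i)) 1 (by omega) hpnext hBne1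
          (fun i' a h1 h2 ha => hnb i' a (by omega) h2 ha)
      rcases hqtr with ⟨h01, _, _, _⟩ | ⟨_, _, hdend, _⟩
      · exact absurd h01 (by omega)
      · exact ⟨p, q, by omega, by omega, hq2, hdbeg, hdend⟩
    · exact absurd h10 (by omega)
  -- key inequalities: tick event versus a `M_γ` or `M_i` event
  have key_tick : ∀ f f' : MEvent Γ l (l + 2), IsMEvent tr f → IsMEvent tr f' →
      f.name = tickName →
      ((∃ g : Γ, f'.name = Sum.inl (Sum.inl g)) ∨ (∃ i : Fin l, f'.name = Sum.inl (Sum.inr i))) →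
      posMap lab acts f'.callPos < posMap lab acts f.retPos ∧
      posMap lab acts f.callPos < posMap lab acts f'.retPos := by
    intro f f' hf hf' hn hcase
    obtain ⟨hA, hB, hAB, hnb, h0, hBst⟩ := htrans f hf
    rw [hn] at hA h0 hBst
    have hB2 : (F (posMap lab acts f.retPos)).2 f.thread =
        some ((tickName : MName Γ l), 2) := hBst
    have hvB : (F (posMap lab acts f.retPos)).1 = DVal.End :=
      pc2_end hF0 hS hN hUacts hB2
    rcases hcase with ⟨g, hg⟩ | ⟨i, hi⟩
    · obtain ⟨z, hz1, hz2, hzRun, t1, m1, p1, p2, d1, hzact⟩ := hwitg f' hf' g hg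
      rcases psi hF0 hS hN hUacts z with ⟨h1, _⟩ | ⟨_, t₀, ht₀⟩ | ⟨h1, _, _⟩
      · rw [hzRun] at h1; cases h1
      · obtain ⟨j, hj, hjc, hjint⟩ := active_origin hF0 hS hN z t₀ tickName 1 ht₀
        have hjA : j = posMap lab acts f.callPos := hUacts j _ t₀ f.thread hjc hA
        have ht0f : f.thread = t₀ := by
          rw [hjA] at hjc
          rw [hjc] at hA
          injection hA with hA2
          injection hA2 with h1 h2
          exact h1.symm
        have hzB : z < posMap lab acts f.retPos := by
          rcases Nat.lt_trichotomy z (posMap lab acts f.retPos) with h | h | h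
          · exact h
          · exfalso; rw [← h] at hB; rw [hB] at hzact; cases hzact
          · exfalso
            exact hjint (posMap lab acts f.retPos) _ (by omega) h hB ht0f
        exact ⟨by omega, by omega⟩
      · rw [hzRun] at h1; cases h1
    · obtain ⟨p, q, hp1, hpq, hq2, hvp, hvq⟩ := hwiti f' hf' i hi
      constructor
      · have hpB : p < posMap lab acts f.retPos := by
          by_contra hc
          push_neg at hc
          have := end_mono hF0 hS hN hUacts (posMap lab acts f.retPos) p hc hvB
          rw [hvp] at this; cases this
        omega
      · rcases psi hF0 hS hN hUacts q with ⟨h1, _⟩ | ⟨h1, _⟩ | ⟨_, _, j, t₁, hj, hjc⟩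
        · rw [hvq] at h1; cases h1
        · rw [hvq] at h1; cases h1
        · have := hUacts j _ t₁ f.thread hjc hA
          omega
  -- key inequalities: `M_i` event versus a `M_γ` or `M_j` event
  have key_ins : ∀ f f' : MEvent Γ l (l + 2), IsMEvent tr f → IsMEvent tr f' →
      (∃ i : Fin l, f.name = Sum.inl (Sum.inr i)) →
      ((∃ g : Γ, f'.name = Sum.inl (Sum.inl g)) ∨ (∃ i : Fin l, f'.name = Sum.inl (Sum.inr i))) →
      posMap lab acts f'.callPos < posMap lab acts f.retPos ∧
      posMap lab acts f.callPos < posMap lab acts f'.retPos := by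
    intro f f' hf hf' hcasef hcase
    obtain ⟨i, hi⟩ := hcasef
    obtain ⟨p, q, hp1, hpq, hq2, hvp, hvq⟩ := hwiti f hf i hi
    rcases hcase with ⟨g, hg⟩ | ⟨i', hi'⟩
    · obtain ⟨z, hz1, hz2, hzRun, _, _, _, _, _, hzact⟩ := hwitg f' hf' g hg
      have hpz : p < z := by
        by_contra hc
        push_neg at hc
        have := begin_mono hS hN z p hc (by rw [hzRun]; simp)
        exact this hvp
      have hzq : z < q := by
        by_contra hc
        push_neg at hc
        have := end_mono hF0 hS hN hUacts q z hc hvq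
        rw [hzRun] at this; cases this
      exact ⟨by omega, by omega⟩
    · obtain ⟨p', q', hp1', hpq', hq2', hvp', hvq'⟩ := hwiti f' hf' i' hi'
      have h1 : p < q' := by
        by_contra hc
        push_neg at hc
        have := end_mono hF0 hS hN hUacts q' p hc hvq'
        rw [hvp] at this; cases this
      have h2 : p' < q := by
        by_contra hc
        push_neg at hc
        have := end_mono hF0 hS hN hUacts q p' hc hvq
        rw [hvp'] at this; cases this
      exact ⟨by omega, by omega⟩
  -- finish: convert the key inequalities into the overlap statement
  have finish : posMap lab acts e'.callPos < posMap lab acts e.retPos →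
      posMap lab acts e.callPos < posMap lab acts e'.retPos →
      ¬ HB e e' ∧ ¬ HB e' e := by
    intro k1 k2
    constructor
    · intro hb
      have hb' : e.retPos < e'.callPos := hb
      have := hmono e.retPos e'.callPos hb' (mevent_callPos_lt he')
      omega
    · intro hb
      have hb' : e'.retPos < e.callPos := hb
      have := hmono e'.retPos e.callPos hb' (mevent_callPos_lt he)
      omega
  rcases hsp with htick | ⟨i, hins⟩
  · rcases hen' : e'.name with (g | i') | u
    · obtain ⟨k1, k2⟩ := key_tick e e' he he' htick (Or.inl ⟨g, hen'⟩)
      exact finish k1 k2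
    · obtain ⟨k1, k2⟩ := key_tick e e' he he' htick (Or.inr ⟨i', hen'⟩)
      exact finish k1 k2
    · -- both are tick events: impossible since they are distinct
      exfalso
      cases u
      have hn'2 : e'.name = tickName := hen'
      have hc1 : tr[e.callPos]? = some (Label.call e.thread tickName) := by
        rw [← htick]; exact he.2.1
      have hc2 : tr[e'.callPos]? = some (Label.call e'.thread tickName) := by
        rw [← hn'2]; exact he'.2.1
      exact hne (mevent_unique he he' (hUtr e.callPos e'.callPos e.thread e'.thread hc1 hc2))
  · rcases hen' : e'.name with (g | i') | u
    · obtain ⟨k1, k2⟩ := key_ins e e' he he' ⟨i, hins⟩ (Or.inl ⟨g, hen'⟩)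
      exact finish k1 k2
    · obtain ⟨k1, k2⟩ := key_ins e e' he he' ⟨i, hins⟩ (Or.inr ⟨i', hen'⟩)
      exact finish k1 k2
    · -- e' is the tick event: use the symmetric key
      cases u
      have hn'2 : e'.name = tickName := hen'
      obtain ⟨k2, k1⟩ := key_tick e' e he' he hn'2 (Or.inr ⟨i, hins⟩)
      exact finish k1 k2

end Paper
end
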